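/- arXiv:2505.05545 — 5 statements merged into one kernel-verified Lean document; each statement's English description precedes it below -/
import Mathlib

section
/- For positive integers n and m, the expression T_n(1-2t) + T_m(1+2t), where T_k denotes the k-th Chebyshev polynomial of the first kind, is a polynomial in t whose degree equals m when m > n, and equals 2*floor(m/2) when m = n. -/
open Polynomial Polynomial.Chebyshev

private lemma scale_coeff (f : ℝ[X]) (a : ℝ) (k : ℕ) :
    (f.comp (C a * X)).coeff k = a ^ k * f.coeff k := by
  induction f using Polynomial.induction_on' with
  | add p q hp hq => simp [add_comp, coeff_add, hp, hq, mul_add]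
  | monomial i r =>
    rw [← C_mul_X_pow_eq_monomial]
    simp only [mul_comp, C_comp, pow_comp, X_comp, mul_pow, ← mul_assoc, ← C_pow, ← C_mul,
      coeff_C_mul, coeff_X_pow]
    rcases eq_or_ne i k with rfl | h
    · rw [← Polynomial.C_mul, coeff_C_mul, coeff_X_pow]
      simp [mul_comm]
    · rw [← Polynomial.C_mul, coeff_C_mul, coeff_X_pow]
      simp [h, Ne.symm h]

private lemma T_deg_coeff : ∀ j : ℕ, (T ℝ j).natDegree ≤ j ∧ (T ℝ j).coeff j = 2 ^ (j - 1) := by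
  intro j
  induction j using Nat.twoStepInduction with
  | zero => simp
  | one => simp
  | more j ih1 ih2 =>
    have hrec : T ℝ (j + 2 : ℕ) = 2 * X * T ℝ (j + 1 : ℕ) - T ℝ (j : ℕ) := by
      push_cast
      exact T_add_two ℝ j
    constructor
    · rw [hrec]
      refine (natDegree_sub_le _ _).trans ?_
      simp only [max_le_iff]
      constructor
      · refine (natDegree_mul_le).trans ?_
        have h1 : (2 * X : ℝ[X]).natDegree ≤ 1 :=
          (natDegree_mul_le).trans (by simp)
        omega
      · omega
    · have hC : (2 * X * T ℝ (j + 1 : ℕ) : ℝ[X]) = C 2 * (X * T ℝ (j + 1 : ℕ)) := by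
        rw [map_ofNat, mul_assoc]
      rw [hrec, coeff_sub, hC, coeff_C_mul, coeff_X_mul,
        coeff_eq_zero_of_natDegree_lt (lt_of_le_of_lt ih1.1 (by omega)), ih2.2]
      simp only [Nat.add_sub_cancel, sub_zero]
      rw [show j + 2 - 1 = j + 1 from by omega, pow_succ]
      ring

private lemma T_coeff_pred : ∀ j : ℕ, (T ℝ (j + 1 : ℕ)).coeff j = 0 := by
  intro j
  induction j using Nat.twoStepInduction with
  | zero => simp
  | one =>
    have h2 : (((1:ℕ) + 1 : ℕ) : ℤ) = 2 := by norm_num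
    rw [h2, T_two]
    simp [coeff_one]
  | more j ih1 ih2 =>
    have hrec : T ℝ (j + 2 + 1 : ℕ) = 2 * X * T ℝ (j + 1 + 1 : ℕ) - T ℝ (j + 1 : ℕ) := by
      have h := T_add_two ℝ ((j:ℤ) + 1)
      rw [add_assoc] at h
      push_cast
      norm_num at h ⊢
      convert h using 2
      ring
    have hC : (2 * X * T ℝ (j + 2 : ℕ) : ℝ[X]) = C 2 * (X * T ℝ (j + 2 : ℕ)) := by
      rw [map_ofNat, mul_assoc]
    rw [hrec, coeff_sub, hC, coeff_C_mul, coeff_X_mul, ih2,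
      coeff_eq_zero_of_natDegree_lt (lt_of_le_of_lt (T_deg_coeff (j+1)).1 (by omega))]
    ring

private lemma comp_lin_coeff (f : ℝ[X]) (a : ℝ) (k : ℕ) :
    (f.comp (1 + C a * X)).coeff k = a ^ k * (hasseDeriv k f).eval 1 := by
  have h : f.comp (1 + C a * X) = (taylor 1 f).comp (C a * X) := by
    rw [taylor_apply, comp_assoc]
    congr 1
    simp [add_comp, add_comm]
  rw [h, scale_coeff, taylor_coeff]

private lemma hd_zero (j k : ℕ) (h : j < k) : hasseDeriv k (T ℝ j) = 0 := by
  ext u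
  rw [hasseDeriv_coeff, coeff_eq_zero_of_natDegree_lt
    (lt_of_le_of_lt (T_deg_coeff j).1 (by omega)), coeff_zero, mul_zero]

private lemma hd_self (j : ℕ) : (hasseDeriv j (T ℝ j)).eval 1 = 2 ^ (j - 1) := by
  rw [eval_eq_sum_range' (lt_of_le_of_lt (natDegree_hasseDeriv_le _ j)
    (by have := (T_deg_coeff j).1; omega : (T ℝ j).natDegree - j < 1)) 1]
  simp [hasseDeriv_coeff, (T_deg_coeff j).2]

private lemma hd_pred (j : ℕ) :
    (hasseDeriv j (T ℝ (j + 1 : ℕ))).eval 1 = (j + 1) * 2 ^ j := by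
  have hd : (T ℝ (j + 1 : ℕ)).natDegree - j < 2 :=
    lt_of_le_of_lt (by have := (T_deg_coeff (j+1)).1; omega) (by omega : 1 < 2)
  rw [eval_eq_sum_range' (lt_of_le_of_lt (natDegree_hasseDeriv_le _ j) hd) 1]
  have hch : (1 + j).choose j = j + 1 := by
    rw [add_comm, ← Nat.choose_symm (Nat.le_succ j)]
    simp
  have h1 := T_coeff_pred j
  have h2 := (T_deg_coeff (j+1)).2
  simp only [Nat.add_sub_cancel] at h2
  simp [Finset.sum_range_succ, hasseDeriv_coeff, hch, add_comm 1 j]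
  push_cast at h1 h2 ⊢
  rw [h1, h2]
  ring

/-- The degree of `T_n(1-2t) + T_m(1+2t)` is `m` when `m > n`,
and `2⌊m/2⌋` when `m = n`. -/
theorem stmt_0 (n m : ℕ) (hn : 0 < n) (hm : 0 < m)
    (ρ : Polynomial ℝ)
    (hρ : ρ = (Polynomial.Chebyshev.T ℝ n).comp (1 - 2 * Polynomial.X)
        + (Polynomial.Chebyshev.T ℝ m).comp (1 + 2 * Polynomial.X)) :
    (m > n → ρ.natDegree = m) ∧ (m = n → ρ.natDegree = 2 * (m / 2)) := by
  have e1 : (1 - 2 * X : ℝ[X]) = 1 + C (-2) * X := by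
    rw [map_neg, map_ofNat]; ring
  have e2 : (1 + 2 * X : ℝ[X]) = 1 + C 2 * X := by rw [map_ofNat]
  have key : ∀ k, ρ.coeff k =
      (-2 : ℝ) ^ k * (hasseDeriv k (T ℝ n)).eval 1
        + 2 ^ k * (hasseDeriv k (T ℝ m)).eval 1 := by
    intro k
    rw [hρ, coeff_add, e1, e2, comp_lin_coeff, comp_lin_coeff]
  have hlinn : (1 - 2 * X : ℝ[X]).natDegree ≤ 1 := by
    refine (natDegree_sub_le _ _).trans ?_
    simp only [natDegree_one, max_le_iff]
    exact ⟨by omega, natDegree_mul_le.trans (by simp)⟩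
  have hlinm : (1 + 2 * X : ℝ[X]).natDegree ≤ 1 := by
    refine (natDegree_add_le _ _).trans ?_
    simp only [natDegree_one, max_le_iff]
    exact ⟨by omega, natDegree_mul_le.trans (by simp)⟩
  have hub : ρ.natDegree ≤ max n m := by
    rw [hρ]
    refine (natDegree_add_le _ _).trans (max_le_max ?_ ?_)
    · exact natDegree_comp_le.trans
        (le_trans (Nat.mul_le_mul (T_deg_coeff n).1 hlinn) (by omega))
    · exact natDegree_comp_le.trans
        (le_trans (Nat.mul_le_mul (T_deg_coeff m).1 hlinm) (by omega))
  constructor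
  · intro hgt
    have hc : ρ.coeff m ≠ 0 := by
      rw [key m, hd_zero n m hgt, hd_self m]
      simp only [eval_zero, mul_zero, zero_add]
      positivity
    exact le_antisymm (by omega) (le_natDegree_of_ne_zero hc)
  · intro he
    subst he
    rcases Nat.even_or_odd m with hev | hod
    · have hc : ρ.coeff m ≠ 0 := by
        rw [key m, hd_self m, hev.neg_pow]
        positivity
      have : ρ.natDegree = m := le_antisymm (by omega) (le_natDegree_of_ne_zero hc)
      obtain ⟨k, hk⟩ := hev
      omega
    · obtain ⟨k, hk⟩ := hod
      have hj : m = 2 * k + 1 := by omega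
      have hcm : ρ.coeff m = 0 := by
        rw [key m, hd_self m, Odd.neg_pow ⟨k, hk⟩]
        ring
      have hck : ρ.coeff (2 * k) ≠ 0 := by
        have hkey := key (2 * k)
        rw [show m = 2 * k + 1 from hj] at hkey
        rw [hkey, hd_pred (2 * k), Even.neg_pow ⟨k, by ring⟩]
        positivity
      have hlb : 2 * k ≤ ρ.natDegree := le_natDegree_of_ne_zero hck
      have hne : ρ.natDegree ≠ m := by
        intro hdm
        have : ρ.leadingCoeff = 0 := by rw [leadingCoeff, hdm, hcm]
        rw [leadingCoeff_eq_zero] at this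
        rw [this] at hck
        simp at hck
      omega
end

section
/- If μ is a positive measure on ℝ with infinite support, p_{k-1} and p_k are its orthonormal polynomials, and x_1, ..., x_k are the roots of p_k, then the rational function p_{k-1}(z)/p_k(z) admits a partial fraction decomposition Σ_{s=1}^{k} d_s/(z - x_s) with all d_s > 0, and consequently z ↦ φ(z) - p_{k-1}(z)/p_k(z) maps the open upper half-plane into itself whenever φ does. -/
open MeasureTheory Polynomial



lemma integrable_eval13 {μ : Measure ℝ} (hmom : ∀ j : ℕ, Integrable (fun x => x ^ j) μ)
    (q : ℝ[X]) : Integrable (fun x => q.eval x) μ := by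
  have h : (fun x => q.eval x)
      = fun x => ∑ i ∈ Finset.range (q.natDegree + 1), q.coeff i * x ^ i := by
    funext t; rw [eval_eq_sum_range]
  rw [h]
  exact integrable_finset_sum _ fun i _ => (hmom i).const_mul _

lemma span_aux13 (P : ℕ → Polynomial ℝ) (hdeg : ∀ i, (P i).natDegree = i)
    (hlead : ∀ i, 0 < (P i).leadingCoeff) :
    ∀ n (q : Polynomial ℝ), (q = 0 ∨ q.natDegree < n) →
      ∃ a : Fin n → ℝ, q = ∑ j, Polynomial.C (a j) * P j := by
  intro n
  induction n with
  | zero =>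
    rintro q (rfl | h)
    · exact ⟨0, by simp⟩
    · omega
  | succ n ih =>
    intro q hq
    have hPn : (P n).coeff n ≠ 0 := by
      have := hlead n
      rw [leadingCoeff, hdeg n] at this
      exact ne_of_gt this
    set t : ℝ := q.coeff n / (P n).coeff n with ht
    set r : Polynomial ℝ := q - Polynomial.C t * P n with hr
    have hqd : q.natDegree ≤ n := by
      rcases hq with rfl | h
      · simp
      · omega
    have hrd : r = 0 ∨ r.natDegree < n := by
      by_cases hr0 : r = 0
      · exact Or.inl hr0
      right
      have h1 : r.natDegree ≤ n := by
        apply le_trans (natDegree_sub_le _ _)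
        simp only [max_le_iff]
        refine ⟨hqd, le_trans (natDegree_mul_le) ?_⟩
        simp [hdeg n]
      have h2 : r.coeff n = 0 := by
        simp [hr, coeff_C_mul, ht, div_mul_cancel₀ _ hPn]
      rcases lt_or_eq_of_le h1 with h | h
      · exact h
      · exfalso
        apply hr0
        have := leadingCoeff_ne_zero.mpr hr0
        rw [leadingCoeff, h] at this
        exact absurd h2 this
    obtain ⟨a, ha⟩ := ih r hrd
    refine ⟨Fin.snoc a t, ?_⟩
    rw [Fin.sum_univ_castSucc]
    simp only [Fin.snoc_castSucc, Fin.snoc_last, Fin.coe_castSucc, Fin.val_last]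
    rw [← ha, hr]
    ring

lemma orth_lower13 {μ : Measure ℝ} (hmom : ∀ j : ℕ, Integrable (fun x => x ^ j) μ)
    (P : ℕ → Polynomial ℝ) (hdeg : ∀ i, (P i).natDegree = i)
    (hlead : ∀ i, 0 < (P i).leadingCoeff)
    (horth : ∀ i j, ∫ x, (P i).eval x * (P j).eval x ∂μ = if i = j then 1 else 0)
    (n : ℕ) (q : Polynomial ℝ) (hq : q = 0 ∨ q.natDegree < n) :
    ∫ x, (P n).eval x * q.eval x ∂μ = 0 := by
  obtain ⟨a, rfl⟩ := span_aux13 P hdeg hlead n q hq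
  have h : (fun x => (P n).eval x * (∑ j : Fin n, Polynomial.C (a j) * P j).eval x)
      = fun x => ∑ j : Fin n, a j * ((P n).eval x * (P j).eval x) := by
    funext t
    rw [eval_finset_sum, Finset.mul_sum]
    refine Finset.sum_congr rfl fun j _ => ?_
    simp [eval_mul]; ring
  rw [h, integral_finset_sum]
  · refine Finset.sum_eq_zero fun j _ => ?_
    rw [integral_const_mul, horth n j, if_neg (by omega), mul_zero]
  · intro j _
    have := (integrable_eval13 hmom (P n * P j)).const_mul (a j)
    simpa [eval_mul] using this

lemma sq_pos13 {μ : Measure ℝ} (hsupp : ∀ s : Finset ℝ, μ ((↑s : Set ℝ)ᶜ) ≠ 0)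
    (hmom : ∀ j : ℕ, Integrable (fun x => x ^ j) μ)
    (q : Polynomial ℝ) (hq : q ≠ 0) : 0 < ∫ x, q.eval x * q.eval x ∂μ := by
  classical
  have hnn : 0 ≤ fun x => q.eval x * q.eval x := fun t => mul_self_nonneg _
  have hint : Integrable (fun x => q.eval x * q.eval x) μ := by
    simpa [eval_mul] using integrable_eval13 hmom (q * q)
  rw [integral_pos_iff_support_of_nonneg hnn hint]
  have hsub : ((q.roots.toFinset : Set ℝ))ᶜ ⊆ Function.support fun t => q.eval t * q.eval t := by
    intro y hy
    simp only [Set.mem_compl_iff, Finset.mem_coe, Multiset.mem_toFinset, mem_roots, hq,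
      ne_eq, not_false_eq_true, true_and, IsRoot.def] at hy
    simp only [Function.mem_support, ne_eq, mul_self_eq_zero]
    tauto
  calc (0:ENNReal) < μ ((q.roots.toFinset : Set ℝ))ᶜ := pos_iff_ne_zero.mpr (hsupp _)
    _ ≤ _ := measure_mono hsub

/-- For orthonormal polynomials of a measure with infinite support, `p_{k-1}/p_k`
has a partial fraction decomposition `Σ d_s/(z - x_s)` with all `d_s > 0` over the
roots `x_s` of `p_k`; consequently `φ - p_{k-1}/p_k` maps the open upper half-plane
into itself whenever `φ` does. -/
theorem stmt_13 (μ : Measure ℝ)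
    (hsupp : ∀ s : Finset ℝ, μ ((↑s : Set ℝ)ᶜ) ≠ 0)
    (hmom : ∀ j : ℕ, Integrable (fun x => x ^ j) μ)
    (P : ℕ → Polynomial ℝ)
    (hdeg : ∀ i, (P i).natDegree = i)
    (hlead : ∀ i, 0 < (P i).leadingCoeff)
    (horth : ∀ i j, ∫ x, (P i).eval x * (P j).eval x ∂μ = if i = j then 1 else 0)
    (k : ℕ) (hk : 1 ≤ k)
    (x : Fin k → ℝ) (hxinj : Function.Injective x)
    (hroot : ∀ s, (P k).eval (x s) = 0) :
    ∃ d : Fin k → ℝ, (∀ s, 0 < d s) ∧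
      (∀ z : ℂ, Polynomial.aeval z (P k) ≠ 0 →
        Polynomial.aeval z (P (k - 1)) / Polynomial.aeval z (P k)
          = ∑ s, ((d s : ℂ) / (z - (x s : ℂ)))) ∧
      (∀ φ : ℂ → ℂ, (∀ w : ℂ, 0 < w.im → 0 < (φ w).im) →
        ∀ w : ℂ, 0 < w.im →
          0 < (φ w - Polynomial.aeval w (P (k - 1)) / Polynomial.aeval w (P k)).im) := by
  classical
  have hP0 : ∀ n, P n ≠ 0 := fun n h => by simpa [h] using hlead n
  set c : ℝ := (P k).leadingCoeff with hc
  have hcpos : 0 < c := hlead k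
  set c' : ℝ := (P (k-1)).leadingCoeff with hc'
  have hc'pos : 0 < c' := hlead (k-1)
  -- the node polynomial
  set R : ℝ[X] := ∏ t : Fin k, (X - Polynomial.C (x t)) with hRdef
  have hRmonic : R.Monic := monic_prod_of_monic _ _ fun t _ => monic_X_sub_C _
  have hRdeg : R.natDegree = k := by
    rw [hRdef, natDegree_prod _ _ fun t _ => X_sub_C_ne_zero (x t)]
    simp [natDegree_X_sub_C]
  have key0 : ∀ f : ℝ[X], f.natDegree < k → (∀ s, f.eval (x s) = 0) → f = 0 := by
    intro f h1 h2
    exact eq_zero_of_natDegree_lt_card_of_eval_eq_zero f hxinj h2 (by simpa using h1)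
  have hRx : ∀ s, R.eval (x s) = 0 := by
    intro s
    rw [hRdef, eval_prod]
    exact Finset.prod_eq_zero (Finset.mem_univ s) (by simp)
  -- P k = C c * R
  have hPkR : P k = Polynomial.C c * R := by
    have hne : P k - Polynomial.C c * R = 0 := by
      by_cases h0 : P k - Polynomial.C c * R = 0
      · exact h0
      apply key0 _ ?_ (fun s => by simp [eval_mul, hroot s, hRx s])
      have hdC : (Polynomial.C c * R).degree = (k : ℕ) := by
        rw [degree_C_mul (ne_of_gt hcpos), ← hRdeg]
        exact degree_eq_natDegree hRmonic.ne_zero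
      have hdP : (P k).degree = (k : ℕ) := by
        rw [degree_eq_natDegree (hP0 k), hdeg k]
      have hlt : (P k - Polynomial.C c * R).degree < (P k).degree :=
        degree_sub_lt (hdP.trans hdC.symm) (hP0 k)
          (by simp [leadingCoeff_mul, leadingCoeff_C, hRmonic.leadingCoeff, hc])
      rw [hdP] at hlt
      exact (natDegree_lt_iff_degree_lt h0).mpr hlt
    exact sub_eq_zero.mp hne
  -- integrals of R * h vanish for low-degree h
  have int2 : ∀ p q : ℝ[X], Integrable (fun t => p.eval t * q.eval t) μ := by
    intro p q
    simpa [eval_mul] using integrable_eval13 hmom (p * q)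
  have hRint : ∀ h : ℝ[X], (h = 0 ∨ h.natDegree < k) → ∫ t, (R * h).eval t ∂μ = 0 := by
    intro h hh
    have he : ∀ t, (R * h).eval t = c⁻¹ * ((P k).eval t * h.eval t) := by
      intro t
      have : (P k).eval t = c * (R.eval t) := by rw [hPkR]; simp [eval_mul]
      rw [eval_mul, this]
      field_simp
    simp_rw [he]
    rw [integral_const_mul, orth_lower13 hmom P hdeg hlead horth k h hh, mul_zero]
  have hvanish : ∀ f : ℝ[X], f.natDegree ≤ 2*k - 2 → (∀ s, f.eval (x s) = 0) →
      ∫ t, f.eval t ∂μ = 0 := by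
    intro f hdf hev
    obtain ⟨h, rfl⟩ : R ∣ f := by
      rw [hRdef]
      refine Finset.prod_dvd_of_coprime (fun a _ b _ hab => ?_) (fun t _ => ?_)
      · exact pairwise_coprime_X_sub_C hxinj hab
      · exact dvd_iff_isRoot.mpr (hev t)
    apply hRint
    by_cases hh : h = 0
    · exact Or.inl hh
    right
    have hmul : (R * h).natDegree = k + h.natDegree := by
      rw [natDegree_mul hRmonic.ne_zero hh, hRdeg]
    omega
  -- Lagrange-type data
  set W : Fin k → ℝ := fun s => ∏ t ∈ Finset.univ.erase s, (x s - x t) with hWdef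
  have hW : ∀ s, W s ≠ 0 := by
    intro s
    rw [hWdef]
    refine Finset.prod_ne_zero_iff.mpr fun t ht => sub_ne_zero.mpr fun h => ?_
    exact (Finset.mem_erase.mp ht).1 (hxinj h).symm
  set Er : Fin k → ℝ[X] := fun s => ∏ t ∈ Finset.univ.erase s, (X - Polynomial.C (x t))
    with hErdef
  have hErmonic : ∀ s, (Er s).Monic := fun s => monic_prod_of_monic _ _ fun t _ => monic_X_sub_C _
  have hErdeg : ∀ s, (Er s).natDegree = k - 1 := by
    intro s
    rw [hErdef, natDegree_prod _ _ fun t _ => X_sub_C_ne_zero (x t)]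
    simp [natDegree_X_sub_C, Finset.card_erase_of_mem]
  have hErself : ∀ s, (Er s).eval (x s) = W s := by
    intro s; rw [hErdef, hWdef, eval_prod]; simp
  have hErother : ∀ s u, u ≠ s → (Er s).eval (x u) = 0 := by
    intro s u hu
    rw [hErdef, eval_prod]
    exact Finset.prod_eq_zero (Finset.mem_erase.mpr ⟨hu, Finset.mem_univ u⟩) (by simp)
  set v : Fin k → ℝ := fun s => (P (k-1)).eval (x s) with hvdef
  set L : Fin k → ℝ := fun s => ∫ t, (Er s).eval t ∂μ with hLdef
  -- (a) : ∫ Er² = W s * L s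
  have hJ : ∀ s, ∫ t, (Er s).eval t * (Er s).eval t ∂μ = W s * L s := by
    intro s
    have hv : ∫ t, (Er s * Er s - Polynomial.C (W s) * Er s).eval t ∂μ = 0 := by
      apply hvanish
      · refine le_trans (natDegree_sub_le _ _) (max_le ?_ ?_)
        · exact le_trans natDegree_mul_le (by rw [hErdeg]; omega)
        · exact le_trans natDegree_mul_le (by simp [hErdeg, natDegree_C]; omega)
      · intro u
        rcases eq_or_ne u s with rfl | hu
        · simp [eval_mul, hErself]
        · simp [eval_mul, hErother s u hu]
    simp_rw [eval_sub, eval_mul, eval_C] at hv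
    rw [integral_sub (int2 (Er s) (Er s)) ((integrable_eval13 hmom (Er s)).const_mul _),
      integral_const_mul, sub_eq_zero] at hv
    exact hv
  -- (b) : I s = v s * L s
  have hI : ∀ s, ∫ t, (P (k-1)).eval t * (Er s).eval t ∂μ = v s * L s := by
    intro s
    have hv : ∫ t, (P (k-1) * Er s - Polynomial.C (v s) * Er s).eval t ∂μ = 0 := by
      apply hvanish
      · refine le_trans (natDegree_sub_le _ _) (max_le ?_ ?_)
        · exact le_trans natDegree_mul_le (by rw [hErdeg, hdeg]; omega)
        · exact le_trans natDegree_mul_le (by simp [hErdeg, natDegree_C]; omega)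
      · intro u
        rcases eq_or_ne u s with rfl | hu
        · simp [eval_mul, hvdef]
        · simp [eval_mul, hErother s u hu]
    simp_rw [eval_sub, eval_mul, eval_C] at hv
    rw [integral_sub (int2 (P (k-1)) (Er s)) ((integrable_eval13 hmom (Er s)).const_mul _),
      integral_const_mul, sub_eq_zero] at hv
    exact hv
  -- (c) : c' * I s = 1
  have hcI : ∀ s, c' * ∫ t, (P (k-1)).eval t * (Er s).eval t ∂μ = 1 := by
    intro s
    set q : ℝ[X] := Polynomial.C c' * Er s - P (k-1) with hqdef
    have hq : q = 0 ∨ q.natDegree < k - 1 := by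
      by_cases h0 : q = 0
      · exact Or.inl h0
      right
      have hdC : (Polynomial.C c' * Er s).degree = ((k-1 : ℕ) : WithBot ℕ) := by
        rw [degree_C_mul (ne_of_gt hc'pos), ← hErdeg s]
        exact degree_eq_natDegree (hErmonic s).ne_zero
      have hdP : (P (k-1)).degree = ((k-1:ℕ) : WithBot ℕ) := by
        rw [degree_eq_natDegree (hP0 (k-1)), hdeg (k-1)]
      have hlt : q.degree < (Polynomial.C c' * Er s).degree :=
        degree_sub_lt (hdC.trans hdP.symm) (by
          intro h; rw [h] at hdC; simp at hdC) (by
          simp [leadingCoeff_mul, leadingCoeff_C, (hErmonic s).leadingCoeff, hc'])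
      rw [hdC] at hlt
      exact (natDegree_lt_iff_degree_lt h0).mpr hlt
    have := orth_lower13 hmom P hdeg hlead horth (k-1) q hq
    simp_rw [hqdef, eval_sub, eval_mul, eval_C, mul_sub] at this
    rw [integral_sub (by simpa [mul_assoc, mul_left_comm] using (int2 (P (k-1)) (Er s)).const_mul c')
      (int2 (P (k-1)) (P (k-1))), sub_eq_zero] at this
    have h2 : ∫ t, (P (k-1)).eval t * ((P (k-1)).eval t) ∂μ = 1 := by
      simpa using horth (k-1) (k-1)
    calc c' * ∫ t, (P (k-1)).eval t * (Er s).eval t ∂μ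
        = ∫ t, (P (k-1)).eval t * (c' * (Er s).eval t) ∂μ := by
          rw [← integral_const_mul]; congr 1; funext t; ring
      _ = 1 := by rw [this, h2]
  -- (d) : 0 < W s * L s
  have hWL : ∀ s, 0 < W s * L s := by
    intro s
    rw [← hJ s]
    exact sq_pos13 hsupp hmom (Er s) (hErmonic s).ne_zero
  -- the weights
  set d : Fin k → ℝ := fun s => v s / (c * W s) with hddef
  have hdpos : ∀ s, 0 < d s := by
    intro s
    have h1 : c' * (v s * L s) = 1 := by rw [← hI s]; exact hcI s
    have hM : 0 < c * c' * (W s * L s) := mul_pos (mul_pos hcpos hc'pos) (hWL s)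
    have hds : d s * (c * c' * (W s * L s)) = c' * (v s * L s) := by
      rw [hddef]
      field_simp [hW s, ne_of_gt hcpos]
    rw [h1] at hds
    nlinarith [hds, hM]
  -- interpolation identity
  have hsum : P (k-1) = ∑ s, Polynomial.C (d s * c) * Er s := by
    have hz : P (k-1) - ∑ s, Polynomial.C (d s * c) * Er s = 0 := by
      apply key0
      · refine lt_of_le_of_lt (natDegree_sub_le _ _) (max_lt ?_ ?_)
        · rw [hdeg]; omega
        · refine lt_of_le_of_lt (natDegree_sum_le_of_forall_le _ _ fun s _ => ?_)
            (show k - 1 < k by omega)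
          exact le_trans natDegree_mul_le (by rw [natDegree_C, hErdeg]; omega)
      · intro u
        rw [eval_sub, eval_finset_sum]
        rw [Finset.sum_eq_single u (fun s _ hs => by
          simp [eval_mul, hErother s u (Ne.symm hs)]) (by simp)]
        rw [eval_mul, eval_C, hErself u, hddef]
        have := hW u
        have := ne_of_gt hcpos
        field_simp [hvdef]
        ring
    exact (sub_eq_zero.mp hz)
  -- complex partial fraction identity
  have hPkC : ∀ z : ℂ, Polynomial.aeval z (P k) = (c:ℂ) * ∏ t, (z - (x t : ℂ)) := by
    intro z
    rw [hPkR, map_mul, aeval_C, hRdef, map_prod]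
    simp [Complex.coe_algebraMap]
  have hPk1C : ∀ z : ℂ, Polynomial.aeval z (P (k-1))
      = ∑ s, ((d s * c : ℝ) : ℂ) * ∏ t ∈ Finset.univ.erase s, (z - (x t : ℂ)) := by
    intro z
    rw [hsum, map_sum]
    refine Finset.sum_congr rfl fun s _ => ?_
    rw [map_mul, aeval_C, hErdef, map_prod]
    simp [Complex.coe_algebraMap]
  have hmain : ∀ z : ℂ, Polynomial.aeval z (P k) ≠ 0 →
      Polynomial.aeval z (P (k - 1)) / Polynomial.aeval z (P k)
        = ∑ s, ((d s : ℂ) / (z - (x s : ℂ))) := by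
    intro z hz
    have hfac : ∀ s, Polynomial.aeval z (P k)
        = (z - (x s:ℂ)) * ((c:ℂ) * ∏ t ∈ Finset.univ.erase s, (z - (x t : ℂ))) := by
      intro s
      rw [hPkC z, ← Finset.mul_prod_erase _ _ (Finset.mem_univ s)]
      ring
    rw [hPk1C z, Finset.sum_div]
    refine Finset.sum_congr rfl fun s _ => ?_
    have h1 : (z - (x s:ℂ)) ≠ 0 := fun h => hz (by rw [hfac s, h, zero_mul])
    have h2 : ((c:ℂ) * ∏ t ∈ Finset.univ.erase s, (z - (x t : ℂ))) ≠ 0 :=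
      fun h => hz (by rw [hfac s, h, mul_zero])
    rw [hfac s, div_eq_div_iff (mul_ne_zero h1 h2) h1]
    push_cast
    ring
  refine ⟨d, hdpos, hmain, ?_⟩
  intro φ hφ w hw
  have hwx : ∀ t : Fin k, (w - (x t : ℂ)) ≠ 0 := by
    intro t h
    have : (w - (x t : ℂ)).im = 0 := by rw [h]; simp
    rw [Complex.sub_im, Complex.ofReal_im, sub_zero] at this
    exact (ne_of_gt hw) this
  have hPkw : Polynomial.aeval w (P k) ≠ 0 := by
    rw [hPkC w]
    exact mul_ne_zero (by exact_mod_cast ne_of_gt hcpos)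
      (Finset.prod_ne_zero_iff.mpr fun t _ => hwx t)
  rw [hmain w hPkw, Complex.sub_im]
  have him : (∑ s, ((d s : ℂ) / (w - (x s : ℂ)))).im ≤ 0 := by
    rw [Complex.im_sum]
    refine Finset.sum_nonpos fun s _ => ?_
    rw [div_eq_mul_inv, Complex.mul_im, Complex.ofReal_re, Complex.ofReal_im, zero_mul,
      add_zero, Complex.inv_im, Complex.sub_im, Complex.ofReal_im, sub_zero]
    have h1 : -w.im / Complex.normSq (w - (x s:ℂ)) ≤ 0 :=
      div_nonpos_of_nonpos_of_nonneg (neg_nonpos.mpr hw.le) (Complex.normSq_nonneg _)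
    exact mul_nonpos_iff.mpr (Or.inl ⟨(hdpos s).le, h1⟩)
  linarith [hφ w hw]
end

section
/- For any integer u with |u| < n and real x > 0: tanh(x)/sinh(2nx) · cosh(2ux) = (1/(2n)) · Σ_{i=1}^{2n-1} (-1)^{i-1} · sin²(πi/(2n)) / (sinh²x + sin²(πi/(2n))) · cos(πiu/n). -/
open Real Finset

set_option maxHeartbeats 1000000

private lemma aux_L1 (N : ℕ) (w : ℂ) (z : ℂ) (hz : z ^ N = 1) :
    (w - z) * (w * z - 1) * (∑ k ∈ Finset.range N, (w ^ (N - 1 - k) + w ^ (k + 1)) * z ^ k)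
      = (w ^ 2 - 1) * (w ^ N - 1) := by
  have hA : (∑ k ∈ Finset.range N, w ^ (N - 1 - k) * z ^ k) * (w - z) = w ^ N - z ^ N := by
    have h := geom_sum₂_mul z w N
    calc (∑ k ∈ Finset.range N, w ^ (N - 1 - k) * z ^ k) * (w - z)
        = -((∑ i ∈ Finset.range N, z ^ i * w ^ (N - 1 - i)) * (z - w)) := by
          rw [Finset.sum_mul, Finset.sum_mul, ← Finset.sum_neg_distrib]
          exact Finset.sum_congr rfl fun i _ => by ring
      _ = w ^ N - z ^ N := by rw [h]; ring
  have hB : (∑ k ∈ Finset.range N, w ^ (k + 1) * z ^ k) * (w * z - 1) = w * ((w*z) ^ N - 1) := by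
    have h := geom_sum_mul (w * z) N
    calc (∑ k ∈ Finset.range N, w ^ (k + 1) * z ^ k) * (w * z - 1)
        = w * ((∑ i ∈ Finset.range N, (w*z) ^ i) * (w * z - 1)) := by
          rw [Finset.sum_mul, Finset.sum_mul, Finset.mul_sum]
          exact Finset.sum_congr rfl fun i _ => by rw [mul_pow]; ring
      _ = w * ((w*z) ^ N - 1) := by rw [h]
  have hsplit : (∑ k ∈ Finset.range N, (w ^ (N - 1 - k) + w ^ (k + 1)) * z ^ k)
      = (∑ k ∈ Finset.range N, w ^ (N - 1 - k) * z ^ k)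
        + (∑ k ∈ Finset.range N, w ^ (k + 1) * z ^ k) := by
    rw [← Finset.sum_add_distrib]
    exact Finset.sum_congr rfl fun i _ => by ring
  have hwzN : (w * z) ^ N = w ^ N := by rw [mul_pow, hz, mul_one]
  rw [hsplit]
  linear_combination (w*z-1) * hA + (w - z) * hB - (w*z-1)*hz + w*(w-z)*hwzN

private lemma aux_E (N : ℕ) (hN : 2 ≤ N) (w : ℂ) (e : ℕ) (he1 : 1 ≤ e) (he2 : e ≤ N + 1) :
    ∑ k ∈ Finset.range N, (w ^ (N - 1 - k) + w ^ (k + 1)) *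
        (if (N:ℤ) ∣ ((e + k : ℕ) : ℤ) then (N:ℂ) else 0)
      = N * (w ^ (e - 1) + w ^ (N + 1 - e)) := by
  set k₀ : ℕ := if e ≤ N then N - e else N - 1 with hk₀
  have hk₀mem : k₀ ∈ Finset.range N := by
    rw [Finset.mem_range, hk₀]
    split <;> omega
  rw [Finset.sum_eq_single_of_mem k₀ hk₀mem]
  · have hdvd : N ∣ e + k₀ := by
      rw [hk₀]; split
      · exact ⟨1, by omega⟩
      · exact ⟨2, by omega⟩
    rw [if_pos (Int.natCast_dvd_natCast.mpr hdvd)]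
    by_cases he : e ≤ N
    · have h1 : N - 1 - k₀ = e - 1 := by rw [hk₀]; split <;> omega
      have h2 : k₀ + 1 = N + 1 - e := by rw [hk₀]; split <;> omega
      rw [h1, h2]; ring
    · have h1 : N - 1 - k₀ = 0 := by rw [hk₀]; split <;> omega
      have h2 : k₀ + 1 = N := by rw [hk₀]; split <;> omega
      have h3 : e - 1 = N := by omega
      have h4 : N + 1 - e = 0 := by omega
      rw [h1, h2, h3, h4]; ring
  · intro k hk hne
    rw [Finset.mem_range] at hk
    rw [if_neg, mul_zero]
    rw [Int.natCast_dvd_natCast]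
    rintro ⟨c, hc⟩
    have hc1 : 1 ≤ c := by nlinarith
    have hc2 : c ≤ 2 := by nlinarith
    interval_cases c
    · apply hne; rw [hk₀]; split <;> omega
    · apply hne; rw [hk₀]; split <;> omega

/-- For integers `|u| < n` and real `x > 0`:
`tanh x/sinh(2nx)·cosh(2ux) = (1/(2n)) Σ_{i=1}^{2n-1} (-1)^{i-1} sin²(πi/(2n))/(sinh²x + sin²(πi/(2n)))·cos(πiu/n)`. -/
theorem stmt_15 (n : ℕ) (hn : 0 < n) (u : ℤ) (hu : |u| < (n : ℤ)) (x : ℝ) (hx : 0 < x) :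
    Real.tanh x / Real.sinh (2 * n * x) * Real.cosh (2 * u * x)
      = (1 / (2 * n)) * ∑ i ∈ Finset.Icc 1 (2 * n - 1),
          (-1 : ℝ) ^ (i - 1) * Real.sin (Real.pi * i / (2 * n)) ^ 2 /
            (Real.sinh x ^ 2 + Real.sin (Real.pi * i / (2 * n)) ^ 2) *
            Real.cos (Real.pi * i * u / n) := by
  rw [← Complex.ofReal_inj]
  push_cast [Complex.ofReal_tanh, Complex.ofReal_sinh, Complex.ofReal_cosh,
    Complex.ofReal_sin, Complex.ofReal_cos]
  obtain ⟨hu1, hu2⟩ := abs_lt.mp hu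
  set N : ℕ := 2 * n with hNdef
  have hN2 : 2 ≤ N := by omega
  have hn0 : (n:ℂ) ≠ 0 := Nat.cast_ne_zero.mpr hn.ne'
  -- ζ and its properties
  set ζ : ℂ := Complex.exp (↑Real.pi * Complex.I / n) with hζdef
  have hπI : (Real.pi : ℂ) * Complex.I ≠ 0 :=
    mul_ne_zero (Complex.ofReal_ne_zero.mpr Real.pi_ne_zero) Complex.I_ne_zero
  have hzpow : ∀ m : ℤ, ζ ^ m = Complex.exp (m * (↑Real.pi * Complex.I / n)) := by
    intro m; rw [← Complex.exp_int_mul]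
  have hζm : ∀ m : ℤ, ζ ^ m = 1 ↔ ((N : ℕ) : ℤ) ∣ m := by
    intro m
    rw [hzpow, Complex.exp_eq_one_iff, hNdef]
    constructor
    · rintro ⟨k, hk⟩
      refine ⟨k, ?_⟩
      have h2 : (m : ℂ) * (↑Real.pi * Complex.I) = ((2*n:ℕ):ℤ) * k * (↑Real.pi * Complex.I) := by
        field_simp at hk
        push_cast
        linear_combination (↑Real.pi * Complex.I) * hk
      have h3 : (m : ℂ) = ((2*n:ℕ):ℤ) * k := mul_right_cancel₀ hπI h2
      exact_mod_cast h3
    · rintro ⟨k, rfl⟩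
      refine ⟨k, ?_⟩
      push_cast
      field_simp
  have hζN : ζ ^ (N:ℤ) = 1 := (hζm N).mpr ⟨1, by ring⟩
  have hζNn : ζ ^ N = 1 := by exact_mod_cast hζN
  have hζ0 : ζ ≠ 0 := by
    intro h
    rw [h, zero_pow (by omega : N ≠ 0)] at hζNn
    exact zero_ne_one hζNn
  have hζn : ζ ^ n = -1 := by
    have hsq : (ζ ^ n - 1) * (ζ ^ n + 1) = 0 := by
      have h := hζNn
      rw [hNdef, two_mul, pow_add] at h
      linear_combination h
    rcases mul_eq_zero.mp hsq with h | h
    · exfalso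
      have h1 : ζ ^ (n:ℤ) = 1 := by rw [zpow_natCast]; linear_combination h
      have hdvd : ((N:ℕ):ℤ) ∣ (n:ℤ) := (hζm n).mp h1
      have := Int.le_of_dvd (by exact_mod_cast hn) hdvd
      push_cast at this
      omega
    · linear_combination h
  have filter : ∀ m : ℤ, ∑ i ∈ Finset.range N, (ζ ^ m) ^ i
      = if (N:ℤ) ∣ m then (N:ℂ) else 0 := by
    intro m
    by_cases hd : (N:ℤ) ∣ m
    · obtain ⟨k, rfl⟩ := hd
      rw [if_pos ⟨k, rfl⟩]
      have h1 : ζ ^ ((N:ℤ) * k) = 1 := by rw [zpow_mul, hζN, one_zpow]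
      rw [h1]
      simp
    · rw [if_neg hd]
      have hne : ζ ^ m ≠ 1 := fun h => hd ((hζm m).mp h)
      rw [geom_sum_eq hne]
      have h1 : (ζ ^ m) ^ N = 1 := by
        rw [← zpow_natCast (ζ ^ m), ← zpow_mul, mul_comm, zpow_mul, hζN, one_zpow]
      rw [h1]
      simp
  have hfilter' : ∀ m : ℕ, ∑ i ∈ Finset.range N, (ζ ^ i) ^ m
      = if (N:ℤ) ∣ (m:ℤ) then (N:ℂ) else 0 := by
    intro m
    rw [← filter m]
    refine Finset.sum_congr rfl fun i _ => ?_
    rw [zpow_natCast, ← pow_mul, mul_comm, pow_mul]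
  -- w
  set r : ℝ := Real.exp (2 * x) with hrdef
  have hr : 1 < r := by have := Real.add_one_le_exp (2 * x); nlinarith
  set w : ℂ := (r : ℂ) with hwdef
  have hw0 : w ≠ 0 := by
    rw [hwdef]; exact_mod_cast (by positivity : r ≠ 0)
  have hwE : w = Complex.exp (2 * ↑x) := by
    rw [hwdef, hrdef, Complex.ofReal_exp]; push_cast; ring_nf
  have hwm : ∀ m : ℕ, 1 ≤ m → w ^ m - 1 ≠ 0 := by
    intro m hm
    have h1 : (1:ℝ) < r ^ m := one_lt_pow₀ hr (by omega)
    have h2 : w ^ m - 1 = ((r ^ m - 1 : ℝ) : ℂ) := by push_cast; ring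
    rw [h2]
    exact_mod_cast (by nlinarith : r ^ m - 1 ≠ 0)
  have hwN1 : w ^ N - 1 ≠ 0 := hwm N (by omega)
  have hw21 : w ^ 2 - 1 ≠ 0 := hwm 2 (by omega)
  have hwp1 : w + 1 ≠ 0 := by
    have h2 : w + 1 = ((r + 1 : ℝ) : ℂ) := by push_cast; ring
    rw [h2]
    exact_mod_cast (by nlinarith : r + 1 ≠ 0)
  -- a1 a2
  set a1 : ℕ := (n + u).toNat with ha1def
  set a2 : ℕ := (n - u).toNat with ha2def
  have ha1 : (a1 : ℤ) = n + u := Int.toNat_of_nonneg (by omega)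
  have ha2 : (a2 : ℤ) = n - u := Int.toNat_of_nonneg (by omega)
  have ha12 : a1 + a2 = N := by omega
  have ha1pos : 1 ≤ a1 := by omega
  have ha1lt : a1 ≤ N - 1 := by omega
  have ha2pos : 1 ≤ a2 := by omega
  have ha2lt : a2 ≤ N - 1 := by omega
  -- E
  set E := Complex.exp (↑x : ℂ) with hEdef
  have hE0 : E ≠ 0 := Complex.exp_ne_zero _
  have hE2 : E ^ 2 = w := by
    rw [hwE, hEdef, ← Complex.exp_nat_mul]; norm_num
  -- a = w^u
  set a : ℂ := w ^ u with hadef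
  have ha0 : a ≠ 0 := zpow_ne_zero _ hw0
  have hwn_a1 : w ^ a1 = w ^ n * a := by
    rw [hadef, ← zpow_natCast w a1, ha1, zpow_add₀ hw0, zpow_natCast]
  have hwn_a2 : w ^ a2 = w ^ n * a⁻¹ := by
    rw [hadef, ← zpow_natCast w a2, ha2, sub_eq_add_neg, zpow_add₀ hw0, zpow_natCast,
      zpow_neg]
  -- sinh cosh tanh values
  have hsinh : Complex.sinh ↑x = (E - E⁻¹) / 2 := by
    rw [eq_div_iff (two_ne_zero' ℂ), mul_comm, Complex.two_sinh, Complex.exp_neg, hEdef]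
  have hcosh : Complex.cosh ↑x = (E + E⁻¹) / 2 := by
    rw [eq_div_iff (two_ne_zero' ℂ), mul_comm, Complex.two_cosh, Complex.exp_neg, hEdef]
  have hcosh0 : E + E⁻¹ ≠ 0 := by
    intro h
    have h2 : (E + E⁻¹) * E = 0 := by rw [h, zero_mul]
    have h3 : w + 1 = 0 := by
      rw [← hE2]; field_simp at h2 ⊢; linear_combination h2
    exact hwp1 h3
  have htanh : Complex.tanh ↑x = (w - 1) / (w + 1) := by
    rw [Complex.tanh_eq_sinh_div_cosh, hsinh, hcosh]
    have h2 : ((E : ℂ) + E⁻¹) / 2 ≠ 0 := div_ne_zero hcosh0 two_ne_zero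
    rw [div_eq_div_iff h2 hwp1]
    field_simp
    linear_combination 2 * hE2
  have hexp2n : Complex.exp (2 * ↑n * ↑x) = w ^ n := by
    rw [hwE, ← Complex.exp_nat_mul]; ring_nf
  have hsinh2n : Complex.sinh (2 * ↑n * ↑x) = (w ^ n - (w ^ n)⁻¹) / 2 := by
    rw [eq_div_iff (two_ne_zero' ℂ), mul_comm, Complex.two_sinh, Complex.exp_neg, hexp2n]
  have hexp2u : Complex.exp (2 * ↑u * ↑x) = a := by
    rw [hadef, hwE, ← Complex.exp_int_mul]; ring_nf
  have hcosh2u : Complex.cosh (2 * ↑u * ↑x) = (a + a⁻¹) / 2 := by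
    rw [eq_div_iff (two_ne_zero' ℂ), mul_comm, Complex.two_cosh, Complex.exp_neg, hexp2u]
  have hwN : w ^ N = w ^ n * w ^ n := by rw [hNdef, two_mul, pow_add]
  have hwn0 : w ^ n ≠ 0 := pow_ne_zero _ hw0
  have hsinh2n' : Complex.sinh (2 * ↑n * ↑x) = (w ^ N - 1) / (2 * w ^ n) := by
    rw [hsinh2n, hwN, div_eq_div_iff (two_ne_zero' ℂ) (mul_ne_zero (two_ne_zero' ℂ) hwn0)]
    field_simp
  have hcosh2u' : Complex.cosh (2 * ↑u * ↑x) = (w ^ a1 + w ^ a2) / (2 * w ^ n) := by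
    rw [hcosh2u, hwn_a1, hwn_a2]; field_simp
  -- step A : closed form for LHS
  have hA : Complex.tanh ↑x / Complex.sinh (2 * ↑n * ↑x) * Complex.cosh (2 * ↑u * ↑x)
      = (w - 1) * (w ^ a1 + w ^ a2) / ((w + 1) * (w ^ N - 1)) := by
    rw [htanh, hsinh2n', hcosh2u']
    field_simp
  rw [hA]
  -- abs facts
  have habsζ : ‖ζ‖ = 1 := by
    rw [hζdef]
    have harg : (↑Real.pi * Complex.I / n) = ((Real.pi / n : ℝ) : ℂ) * Complex.I := by
      push_cast; ring
    rw [harg, Complex.norm_exp, Complex.mul_I_re]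
    simp
  have habsζi : ∀ i : ℕ, ‖ζ ^ i‖ = 1 := by
    intro i; rw [norm_pow, habsζ, one_pow]
  have habsw : ‖w‖ = r := by
    rw [hwdef, Complex.norm_real, Real.norm_eq_abs, abs_of_pos (by linarith)]
  have hwz : ∀ i : ℕ, w - ζ ^ i ≠ 0 := by
    intro i h
    rw [sub_eq_zero] at h
    have h2 := habsζi i
    rw [← h, habsw] at h2
    linarith
  have hwz1 : ∀ i : ℕ, w * ζ ^ i - 1 ≠ 0 := by
    intro i h
    rw [sub_eq_zero] at h
    have h2 : ‖w * ζ ^ i‖ = 1 := by rw [h, norm_one]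
    rw [norm_mul, habsw, habsζi, mul_one] at h2
    linarith
  -- per-term identity
  have hterm : ∀ i : ℕ, 1 ≤ i →
      (-1:ℂ)^(i-1) * Complex.sin (↑Real.pi * ↑i / (2*↑n))^2 /
          (Complex.sinh ↑x^2 + Complex.sin (↑Real.pi * ↑i / (2*↑n))^2) *
          Complex.cos (↑Real.pi * ↑i * ↑u / ↑n)
        = w / (2 * ((w^2-1) * (w^N-1))) *
            ((ζ^i)^n * (1 - ζ^i)^2 * ((ζ^i)^u + (ζ^i)^(-u)) *
              ∑ k ∈ Finset.range N, (w^(N-1-k) + w^(k+1)) * (ζ^i)^k) := by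
    intro i hi
    set z := ζ ^ i with hz
    have hzN : z ^ N = 1 := by rw [hz, ← pow_mul, mul_comm, pow_mul, hζNn, one_pow]
    have hz0 : z ≠ 0 := pow_ne_zero _ hζ0
    have hzn : z ^ n = (-1:ℂ) ^ i := by rw [hz, ← pow_mul, mul_comm, pow_mul, hζn]
    have hQ : (w - z) * (w * z - 1) * (∑ k ∈ Finset.range N, (w^(N-1-k) + w^(k+1)) * z^k)
        = (w^2 - 1) * (w^N - 1) := aux_L1 N w z hzN
    set Q := ∑ k ∈ Finset.range N, (w^(N-1-k) + w^(k+1)) * z^k with hQdef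
    have hQ0 : Q ≠ 0 := by
      intro h
      exact (mul_ne_zero hw21 hwN1) (by rw [← hQ, h, mul_zero])
    have hwzi : w - z ≠ 0 := hwz i
    have hwz1i : w * z - 1 ≠ 0 := hwz1 i
    set F := Complex.exp (↑Real.pi * ↑i / (2*↑n) * Complex.I) with hFdef
    have hF0 : F ≠ 0 := Complex.exp_ne_zero _
    have hF2 : F ^ 2 = z := by
      rw [hFdef, ← Complex.exp_nat_mul, hz, hζdef, ← Complex.exp_nat_mul]
      congr 1
      push_cast
      field_simp
    have hsin : Complex.sin (↑Real.pi * ↑i / (2*↑n)) = (F⁻¹ - F) * Complex.I / 2 := by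
      rw [eq_div_iff (two_ne_zero' ℂ), mul_comm, Complex.two_sin, neg_mul, Complex.exp_neg,
        hFdef]
    have hsin2 : Complex.sin (↑Real.pi * ↑i / (2*↑n))^2 = -(1-z)^2/(4*z) := by
      rw [hsin, ← hF2]
      field_simp
      linear_combination (4 - 8*F^2 + 4*F^4) * Complex.I_sq
    have hzu : Complex.exp (↑Real.pi * ↑i * ↑u / ↑n * Complex.I) = z ^ u := by
      rw [hz, hζdef, ← Complex.exp_nat_mul, ← Complex.exp_int_mul]
      congr 1
      push_cast
      field_simp
    have hcos : Complex.cos (↑Real.pi * ↑i * ↑u / ↑n) = (z^u + z^(-u))/2 := by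
      rw [eq_div_iff (two_ne_zero' ℂ), mul_comm, Complex.two_cos, neg_mul, Complex.exp_neg,
        hzu, zpow_neg]
    have hden : Complex.sinh ↑x^2 + Complex.sin (↑Real.pi * ↑i / (2*↑n))^2
        = (w-z)*(w*z-1)/(4*w*z) := by
      rw [hsin2, hsinh, ← hE2]
      field_simp
      ring
    have hfac : (-1:ℂ)^(i-1) = -z^n := by
      have h1 : i - 1 + 1 = i := by omega
      have h2 : (-1:ℂ)^i = (-1:ℂ)^(i-1) * (-1) := by rw [← pow_succ, h1]
      rw [hzn, h2]
      ring
    rw [hden, hsin2, hcos, hfac]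
    rw [zpow_neg]
    set v := z ^ u with hv
    have hv0 : v ≠ 0 := zpow_ne_zero _ hz0
    have h4wz : (4:ℂ) * w * z ≠ 0 := by
      apply mul_ne_zero (mul_ne_zero _ hw0) hz0
      norm_num
    have hD0 : (w - z) * (w*z-1) / (4*w*z) ≠ 0 :=
      div_ne_zero (mul_ne_zero hwzi hwz1i) h4wz
    have hden1 : (2:ℂ) * ((w^2-1) * (w^N-1)) ≠ 0 :=
      mul_ne_zero two_ne_zero (mul_ne_zero hw21 hwN1)
    have hden2 : (2:ℂ) * ((w - z) * (w*z-1)) ≠ 0 :=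
      mul_ne_zero two_ne_zero (mul_ne_zero hwzi hwz1i)
    have hRHS : w / (2 * ((w^2-1) * (w^N-1))) * (z^n * (1-z)^2 * (v + v⁻¹) * Q)
        = w * (z^n * (1-z)^2 * (v + v⁻¹)) / (2 * ((w - z) * (w*z-1))) := by
      rw [div_mul_eq_mul_div, div_eq_div_iff hden1 hden2]
      linear_combination 2 * w * z^n * (1-z)^2 * (v + v⁻¹) * hQ
    rw [hRHS, div_mul_eq_mul_div, div_eq_iff hD0]
    rw [div_mul_div_comm, eq_div_iff (mul_ne_zero hden2 h4wz)]
    field_simp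
  -- monomial expansion
  have hmono : ∀ i k : ℕ,
      (ζ^i)^n * (1 - ζ^i)^2 * ((ζ^i)^u + (ζ^i)^(-u)) * (ζ^i)^k
        = (ζ^i)^(a1+k) + (ζ^i)^(a2+k) - 2*(ζ^i)^(a1+1+k) - 2*(ζ^i)^(a2+1+k)
          + (ζ^i)^(a1+2+k) + (ζ^i)^(a2+2+k) := by
    intro i k
    set c := ζ ^ i with hc
    have hc0 : c ≠ 0 := pow_ne_zero _ hζ0
    have hca1 : c^a1 = c^n * c^u := by
      rw [← zpow_natCast c a1, ha1, zpow_add₀ hc0, zpow_natCast]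
    have hca2 : c^a2 = c^n * (c^u)⁻¹ := by
      rw [← zpow_natCast c a2, ha2, sub_eq_add_neg, zpow_add₀ hc0, zpow_natCast, zpow_neg]
    have hv0 : c^u ≠ 0 := zpow_ne_zero _ hc0
    rw [zpow_neg]
    simp only [pow_add]
    rw [hca1, hca2]
    ring
  -- the R function values
  have hsum_k :
      ∑ k ∈ Finset.range N, ((w^(N-1-k) + w^(k+1)) *
        ((if (N:ℤ) ∣ ((a1 + k : ℕ) : ℤ) then (N:ℂ) else 0)
          + (if (N:ℤ) ∣ ((a2 + k : ℕ) : ℤ) then (N:ℂ) else 0)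
          - 2*(if (N:ℤ) ∣ ((a1 + 1 + k : ℕ) : ℤ) then (N:ℂ) else 0)
          - 2*(if (N:ℤ) ∣ ((a2 + 1 + k : ℕ) : ℤ) then (N:ℂ) else 0)
          + (if (N:ℤ) ∣ ((a1 + 2 + k : ℕ) : ℤ) then (N:ℂ) else 0)
          + (if (N:ℤ) ∣ ((a2 + 2 + k : ℕ) : ℤ) then (N:ℂ) else 0)))
      = (N:ℂ) * ((w^(a1-1) + w^(N+1-a1)) + (w^(a2-1) + w^(N+1-a2))
          - 2*(w^(a1+1-1) + w^(N+1-(a1+1))) - 2*(w^(a2+1-1) + w^(N+1-(a2+1)))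
          + (w^(a1+2-1) + w^(N+1-(a1+2))) + (w^(a2+2-1) + w^(N+1-(a2+2)))) := by
    have e1 := aux_E N hN2 w a1 (by omega) (by omega)
    have e2 := aux_E N hN2 w a2 (by omega) (by omega)
    have e3 := aux_E N hN2 w (a1+1) (by omega) (by omega)
    have e4 := aux_E N hN2 w (a2+1) (by omega) (by omega)
    have e5 := aux_E N hN2 w (a1+2) (by omega) (by omega)
    have e6 := aux_E N hN2 w (a2+2) (by omega) (by omega)
    calc ∑ k ∈ Finset.range N, ((w^(N-1-k) + w^(k+1)) *
        ((if (N:ℤ) ∣ ((a1 + k : ℕ) : ℤ) then (N:ℂ) else 0)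
          + (if (N:ℤ) ∣ ((a2 + k : ℕ) : ℤ) then (N:ℂ) else 0)
          - 2*(if (N:ℤ) ∣ ((a1 + 1 + k : ℕ) : ℤ) then (N:ℂ) else 0)
          - 2*(if (N:ℤ) ∣ ((a2 + 1 + k : ℕ) : ℤ) then (N:ℂ) else 0)
          + (if (N:ℤ) ∣ ((a1 + 2 + k : ℕ) : ℤ) then (N:ℂ) else 0)
          + (if (N:ℤ) ∣ ((a2 + 2 + k : ℕ) : ℤ) then (N:ℂ) else 0)))
        = ∑ k ∈ Finset.range N,
            (((w^(N-1-k) + w^(k+1)) * (if (N:ℤ) ∣ ((a1 + k : ℕ) : ℤ) then (N:ℂ) else 0)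
              + (w^(N-1-k) + w^(k+1)) * (if (N:ℤ) ∣ ((a2 + k : ℕ) : ℤ) then (N:ℂ) else 0)
              - 2*((w^(N-1-k) + w^(k+1)) * (if (N:ℤ) ∣ ((a1 + 1 + k : ℕ) : ℤ) then (N:ℂ) else 0))
              - 2*((w^(N-1-k) + w^(k+1)) * (if (N:ℤ) ∣ ((a2 + 1 + k : ℕ) : ℤ) then (N:ℂ) else 0))
              + (w^(N-1-k) + w^(k+1)) * (if (N:ℤ) ∣ ((a1 + 2 + k : ℕ) : ℤ) then (N:ℂ) else 0)
              + (w^(N-1-k) + w^(k+1)) * (if (N:ℤ) ∣ ((a2 + 2 + k : ℕ) : ℤ) then (N:ℂ) else 0))) := by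
          refine Finset.sum_congr rfl fun k _ => by ring
      _ = (N:ℂ) * ((w^(a1-1) + w^(N+1-a1)) + (w^(a2-1) + w^(N+1-a2))
          - 2*(w^(a1+1-1) + w^(N+1-(a1+1))) - 2*(w^(a2+1-1) + w^(N+1-(a2+1)))
          + (w^(a1+2-1) + w^(N+1-(a1+2))) + (w^(a2+2-1) + w^(N+1-(a2+2)))) := by
          rw [Finset.sum_add_distrib, Finset.sum_add_distrib, Finset.sum_sub_distrib,
            Finset.sum_sub_distrib, Finset.sum_add_distrib, ← Finset.mul_sum, ← Finset.mul_sum,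
            e1, e2, e3, e4, e5, e6]
          ring

  -- inner sum over i for fixed k
  have hinner : ∀ k : ℕ, (∑ i ∈ Finset.range N, ((ζ^i)^n * (1 - ζ^i)^2 * ((ζ^i)^u + (ζ^i)^(-u)) * (ζ^i)^k))
      = ((if (N:ℤ) ∣ ((a1 + k : ℕ) : ℤ) then (N:ℂ) else 0) + (if (N:ℤ) ∣ ((a2 + k : ℕ) : ℤ) then (N:ℂ) else 0) - 2*(if (N:ℤ) ∣ ((a1 + 1 + k : ℕ) : ℤ) then (N:ℂ) else 0) - 2*(if (N:ℤ) ∣ ((a2 + 1 + k : ℕ) : ℤ) then (N:ℂ) else 0) + (if (N:ℤ) ∣ ((a1 + 2 + k : ℕ) : ℤ) then (N:ℂ) else 0) + (if (N:ℤ) ∣ ((a2 + 2 + k : ℕ) : ℤ) then (N:ℂ) else 0)) := by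
    intro k
    calc (∑ i ∈ Finset.range N, ((ζ^i)^n * (1 - ζ^i)^2 * ((ζ^i)^u + (ζ^i)^(-u)) * (ζ^i)^k))
        = ∑ i ∈ Finset.range N, ((ζ^i)^(a1+k) + (ζ^i)^(a2+k) - 2*(ζ^i)^(a1+1+k) - 2*(ζ^i)^(a2+1+k) + (ζ^i)^(a1+2+k) + (ζ^i)^(a2+2+k)) :=
          Finset.sum_congr rfl fun i _ => hmono i k
      _ = ((if (N:ℤ) ∣ ((a1 + k : ℕ) : ℤ) then (N:ℂ) else 0) + (if (N:ℤ) ∣ ((a2 + k : ℕ) : ℤ) then (N:ℂ) else 0) - 2*(if (N:ℤ) ∣ ((a1 + 1 + k : ℕ) : ℤ) then (N:ℂ) else 0) - 2*(if (N:ℤ) ∣ ((a2 + 1 + k : ℕ) : ℤ) then (N:ℂ) else 0) + (if (N:ℤ) ∣ ((a1 + 2 + k : ℕ) : ℤ) then (N:ℂ) else 0) + (if (N:ℤ) ∣ ((a2 + 2 + k : ℕ) : ℤ) then (N:ℂ) else 0)) := by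
          simp only [Finset.sum_add_distrib, Finset.sum_sub_distrib, ← Finset.mul_sum]
          rw [hfilter' (a1+k), hfilter' (a2+k), hfilter' (a1+1+k), hfilter' (a2+1+k),
            hfilter' (a1+2+k), hfilter' (a2+2+k)]
  -- extend Icc sum to range and swap
  have hIccIco : Finset.Icc 1 (N-1) = Finset.Ico 1 N := by
    rw [← Finset.Ico_add_one_right_eq_Icc]
    congr 1
    omega
  have hext : (∑ i ∈ Finset.Icc 1 (N-1), (w / (2 * ((w^2-1) * (w^N-1))) * ((ζ^i)^n * (1 - ζ^i)^2 * ((ζ^i)^u + (ζ^i)^(-u)) * ∑ k ∈ Finset.range N, (w^(N-1-k) + w^(k+1)) * (ζ^i)^k))) = ∑ i ∈ Finset.range N, (w / (2 * ((w^2-1) * (w^N-1))) * ((ζ^i)^n * (1 - ζ^i)^2 * ((ζ^i)^u + (ζ^i)^(-u)) * ∑ k ∈ Finset.range N, (w^(N-1-k) + w^(k+1)) * (ζ^i)^k)) := by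
    refine Finset.sum_subset ?_ ?_
    · intro i hi
      rw [Finset.mem_Icc] at hi
      rw [Finset.mem_range]
      omega
    · intro i hi1 hi2
      rw [Finset.mem_range] at hi1
      rw [Finset.mem_Icc] at hi2
      have hi0 : i = 0 := by omega
      subst hi0
      simp
  have hswap : (∑ i ∈ Finset.range N, (w / (2 * ((w^2-1) * (w^N-1))) * ((ζ^i)^n * (1 - ζ^i)^2 * ((ζ^i)^u + (ζ^i)^(-u)) * ∑ k ∈ Finset.range N, (w^(N-1-k) + w^(k+1)) * (ζ^i)^k)))
      = w / (2 * ((w^2-1) * (w^N-1))) * ((N:ℂ) * ((w^(a1-1) + w^(N+1-a1)) + (w^(a2-1) + w^(N+1-a2)) - 2*(w^(a1+1-1) + w^(N+1-(a1+1))) - 2*(w^(a2+1-1) + w^(N+1-(a2+1))) + (w^(a1+2-1) + w^(N+1-(a1+2))) + (w^(a2+2-1) + w^(N+1-(a2+2))))) := by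
    calc (∑ i ∈ Finset.range N, (w / (2 * ((w^2-1) * (w^N-1))) * ((ζ^i)^n * (1 - ζ^i)^2 * ((ζ^i)^u + (ζ^i)^(-u)) * ∑ k ∈ Finset.range N, (w^(N-1-k) + w^(k+1)) * (ζ^i)^k)))
        = ∑ i ∈ Finset.range N, ∑ k ∈ Finset.range N,
            (w / (2 * ((w^2-1) * (w^N-1))) * ((w^(N-1-k) + w^(k+1)) * ((ζ^i)^n * (1 - ζ^i)^2 * ((ζ^i)^u + (ζ^i)^(-u)) * (ζ^i)^k))) := by
          refine Finset.sum_congr rfl fun i _ => ?_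
          rw [Finset.mul_sum, Finset.mul_sum]
          exact Finset.sum_congr rfl fun k _ => by ring
      _ = ∑ k ∈ Finset.range N, ∑ i ∈ Finset.range N,
            (w / (2 * ((w^2-1) * (w^N-1))) * ((w^(N-1-k) + w^(k+1)) * ((ζ^i)^n * (1 - ζ^i)^2 * ((ζ^i)^u + (ζ^i)^(-u)) * (ζ^i)^k))) := Finset.sum_comm
      _ = ∑ k ∈ Finset.range N,
            (w / (2 * ((w^2-1) * (w^N-1))) * ((w^(N-1-k) + w^(k+1)) * (∑ i ∈ Finset.range N, ((ζ^i)^n * (1 - ζ^i)^2 * ((ζ^i)^u + (ζ^i)^(-u)) * (ζ^i)^k)))) := by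
          refine Finset.sum_congr rfl fun k _ => ?_
          rw [← Finset.mul_sum, ← Finset.mul_sum]
      _ = ∑ k ∈ Finset.range N, (w / (2 * ((w^2-1) * (w^N-1))) * ((w^(N-1-k) + w^(k+1)) * ((if (N:ℤ) ∣ ((a1 + k : ℕ) : ℤ) then (N:ℂ) else 0) + (if (N:ℤ) ∣ ((a2 + k : ℕ) : ℤ) then (N:ℂ) else 0) - 2*(if (N:ℤ) ∣ ((a1 + 1 + k : ℕ) : ℤ) then (N:ℂ) else 0) - 2*(if (N:ℤ) ∣ ((a2 + 1 + k : ℕ) : ℤ) then (N:ℂ) else 0) + (if (N:ℤ) ∣ ((a1 + 2 + k : ℕ) : ℤ) then (N:ℂ) else 0) + (if (N:ℤ) ∣ ((a2 + 2 + k : ℕ) : ℤ) then (N:ℂ) else 0)))) := by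
          refine Finset.sum_congr rfl fun k _ => ?_
          rw [hinner k]
      _ = w / (2 * ((w^2-1) * (w^N-1))) * (∑ k ∈ Finset.range N, ((w^(N-1-k) + w^(k+1)) * ((if (N:ℤ) ∣ ((a1 + k : ℕ) : ℤ) then (N:ℂ) else 0) + (if (N:ℤ) ∣ ((a2 + k : ℕ) : ℤ) then (N:ℂ) else 0) - 2*(if (N:ℤ) ∣ ((a1 + 1 + k : ℕ) : ℤ) then (N:ℂ) else 0) - 2*(if (N:ℤ) ∣ ((a2 + 1 + k : ℕ) : ℤ) then (N:ℂ) else 0) + (if (N:ℤ) ∣ ((a1 + 2 + k : ℕ) : ℤ) then (N:ℂ) else 0) + (if (N:ℤ) ∣ ((a2 + 2 + k : ℕ) : ℤ) then (N:ℂ) else 0)))) := by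
          rw [← Finset.mul_sum]
      _ = w / (2 * ((w^2-1) * (w^N-1))) * ((N:ℂ) * ((w^(a1-1) + w^(N+1-a1)) + (w^(a2-1) + w^(N+1-a2)) - 2*(w^(a1+1-1) + w^(N+1-(a1+1))) - 2*(w^(a2+1-1) + w^(N+1-(a2+1))) + (w^(a1+2-1) + w^(N+1-(a1+2))) + (w^(a2+2-1) + w^(N+1-(a2+2))))) := by rw [hsum_k]
  -- put everything together
  rw [Finset.sum_congr rfl (fun i hi => hterm i ((Finset.mem_Icc.mp hi).1)), hext, hswap]
  -- final algebraic identity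
  have hNc : ((N:ℕ):ℂ) = 2*(n:ℂ) := by rw [hNdef]; push_cast; ring
  obtain ⟨p, hp⟩ : ∃ p, a1 = p + 1 := ⟨a1 - 1, by omega⟩
  obtain ⟨q, hq⟩ : ∃ q, N = p + q + 2 := ⟨N - p - 2, by omega⟩
  rw [show a1 - 1 = p from by omega, show N+1-a1 = q+2 from by omega,
    show a2 - 1 = q from by omega, show N+1-a2 = p+2 from by omega,
    show a1+1-1 = p+1 from by omega, show N+1-(a1+1) = q+1 from by omega,
    show a2+1-1 = q+1 from by omega, show N+1-(a2+1) = p+1 from by omega,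
    show a1+2-1 = p+2 from by omega, show N+1-(a1+2) = q from by omega,
    show a2+2-1 = q+2 from by omega, show N+1-(a2+2) = p from by omega,
    show a1 = p+1 from hp, show a2 = q+1 from by omega, hNc, hq]
  have hn2 : (2:ℂ) * (n:ℂ) ≠ 0 := mul_ne_zero two_ne_zero hn0
  have hwpq1 : w^(p+q+2) - 1 ≠ 0 := by rw [← hq]; exact hwN1
  field_simp
  ring
end

section
/- For any odd positive integer m and real x > 0: Σ_{j=1}^{(m-1)/2} sinh²x / (sin²(πj/m) + sinh²x) = (m/2)·tanh(x)/tanh(mx) - 1/2. -/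
open Real Finset

noncomputable section
namespace Stmt16

lemma abs_one_sub_ne {r : ℝ} (hr : 1 < r) {w : ℂ} (hw : ‖w‖ = 1) :
    (r : ℂ) - w ≠ 0 := by
  intro hzero
  rw [sub_eq_zero] at hzero
  have : ‖(r : ℂ)‖ = 1 := by rw [hzero, hw]
  rw [Complex.norm_real, Real.norm_eq_abs, abs_of_pos (by linarith)] at this
  linarith

lemma abs_zeta_pow (m : ℕ) (a : ℕ) :
    ‖Complex.exp (2 * Real.pi * Complex.I / m) ^ a‖ = 1 := by
  rw [norm_pow]
  have : (2 * (Real.pi : ℂ) * Complex.I / m) = ((2 * Real.pi / m : ℝ) : ℂ) * Complex.I := by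
    push_cast; ring
  rw [this, Complex.norm_exp_ofReal_mul_I, one_pow]

lemma tanh_aux (t : ℝ) : Real.tanh t = (Real.exp (2*t) - 1) / (Real.exp (2*t) + 1) := by
  rw [Real.tanh_eq_sinh_div_cosh, Real.sinh_eq, Real.cosh_eq,
    show (2:ℝ)*t = t + t by ring, Real.exp_add, Real.exp_neg]
  have h0 : Real.exp t ≠ 0 := (Real.exp_pos t).ne'
  have h1 : Real.exp t * Real.exp t + 1 ≠ 0 := by positivity
  have h2 : Real.exp t + (Real.exp t)⁻¹ ≠ 0 := by positivity
  field_simp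

lemma sin_unfold (t : ℂ) : Complex.sin t = ((Complex.exp (t * Complex.I))⁻¹ - Complex.exp (t * Complex.I)) * Complex.I / 2 := by
  rw [Complex.sin, neg_mul, Complex.exp_neg]

lemma sinh_unfold (t : ℂ) : Complex.sinh t = (Complex.exp t - (Complex.exp t)⁻¹) / 2 := by
  rw [Complex.sinh, Complex.exp_neg]

lemma sum_aux (m : ℕ) (hm : m ≠ 0) (z : ℂ) (hzm : z ^ m ≠ 1) :
    ∑ j ∈ Finset.range m,
        Complex.exp (2 * Real.pi * Complex.I / m) ^ j
          / (z - Complex.exp (2 * Real.pi * Complex.I / m) ^ j)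
      = m / (z ^ m - 1) := by
  set ζ : ℂ := Complex.exp (2 * Real.pi * Complex.I / m) with hζdef
  have hζ : IsPrimitiveRoot ζ m := Complex.isPrimitiveRoot_exp m hm
  have hζm : ζ ^ m = 1 := hζ.pow_eq_one
  have hpow : ∀ j : ℕ, (ζ ^ j) ^ m = 1 := by
    intro j; rw [← pow_mul, mul_comm, pow_mul, hζm, one_pow]
  have hne : ∀ j : ℕ, z - ζ ^ j ≠ 0 := by
    intro j
    refine sub_ne_zero.mpr ?_
    rintro rfl
    exact hzm (hpow j)
  rw [eq_div_iff (sub_ne_zero.mpr hzm), Finset.sum_mul]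
  have step1 : ∀ j ∈ Finset.range m,
      ζ ^ j / (z - ζ ^ j) * (z ^ m - 1)
        = ∑ k ∈ Finset.range m, z ^ k * (ζ ^ (m - k)) ^ j := by
    intro j hj
    have hg : (∑ k ∈ Finset.range m, z ^ k * (ζ ^ j) ^ (m - 1 - k)) * (z - ζ ^ j)
        = z ^ m - 1 := by rw [geom_sum₂_mul, hpow j]
    calc ζ ^ j / (z - ζ ^ j) * (z ^ m - 1)
        = ζ ^ j * ((z ^ m - 1) / (z - ζ ^ j)) := by ring
      _ = ζ ^ j * ∑ k ∈ Finset.range m, z ^ k * (ζ ^ j) ^ (m - 1 - k) := by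
          rw [← hg, mul_div_cancel_right₀ _ (hne j)]
      _ = _ := by
          rw [Finset.mul_sum]
          refine Finset.sum_congr rfl fun k hk => ?_
          have hk' : k < m := Finset.mem_range.mp hk
          have h1 : m - 1 - k + 1 = m - k := by omega
          calc ζ ^ j * (z ^ k * (ζ ^ j) ^ (m - 1 - k))
              = z ^ k * ((ζ ^ j) ^ (m - 1 - k) * ζ ^ j) := by ring
            _ = z ^ k * (ζ ^ j) ^ (m - 1 - k + 1) := by rw [pow_succ]
            _ = z ^ k * (ζ ^ (m - k)) ^ j := by rw [h1, pow_right_comm]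
  rw [Finset.sum_congr rfl step1, Finset.sum_comm]
  have step2 : ∀ k ∈ Finset.range m,
      (∑ j ∈ Finset.range m, z ^ k * (ζ ^ (m - k)) ^ j)
        = if k = 0 then (m : ℂ) else 0 := by
    intro k hk
    have hk' : k < m := Finset.mem_range.mp hk
    rw [← Finset.mul_sum]
    by_cases h0 : k = 0
    · subst h0
      simp [hζm]
    · have h1 : ζ ^ (m - k) ≠ 1 :=
        hζ.pow_ne_one_of_pos_of_lt (by omega) (by omega)
      rw [geom_sum_eq h1]
      have h2 : (ζ ^ (m - k)) ^ m = 1 := hpow (m - k)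
      rw [h2]
      simp [h0]
  rw [Finset.sum_congr rfl step2, Finset.sum_ite_eq' (Finset.range m) 0 (fun _ => (m : ℂ))]
  simp [Nat.pos_of_ne_zero hm]

lemma term_eq (m : ℕ) (hm : m ≠ 0) (x : ℝ) (hx : 0 < x) (a : ℕ) (ha : a ≤ m) :
    Complex.sinh (x : ℂ) ^ 2
        / (Complex.sin ((Real.pi : ℂ) * a / m) ^ 2 + Complex.sinh (x : ℂ) ^ 2)
      = (((Real.exp (2*x) : ℝ) : ℂ) - 1) / (((Real.exp (2*x) : ℝ) : ℂ) + 1)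
        * (Complex.exp (2 * Real.pi * Complex.I / m) ^ a
              / (((Real.exp (2*x) : ℝ) : ℂ) - Complex.exp (2 * Real.pi * Complex.I / m) ^ a)
           + Complex.exp (2 * Real.pi * Complex.I / m) ^ (m - a)
              / (((Real.exp (2*x) : ℝ) : ℂ) - Complex.exp (2 * Real.pi * Complex.I / m) ^ (m - a))
           + 1) := by
  have hr : 1 < Real.exp (2*x) := by
    rw [Real.one_lt_exp_iff]; linarith
  set ζ : ℂ := Complex.exp (2 * Real.pi * Complex.I / m) with hζdef
  set z : ℂ := ((Real.exp (2*x) : ℝ) : ℂ) with hzdef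
  set E : ℂ := Complex.exp (x : ℂ) with hEdef
  set u : ℂ := Complex.exp ((Real.pi : ℂ) * a / m * Complex.I) with hudef
  have hζm : ζ ^ m = 1 := (Complex.isPrimitiveRoot_exp m hm).pow_eq_one
  have hEz : z = E ^ 2 := by
    rw [hzdef, hEdef, Complex.ofReal_exp, ← Complex.exp_nat_mul]
    push_cast
    norm_num
  have hw : ζ ^ a = u ^ 2 := by
    rw [hζdef, hudef, ← Complex.exp_nat_mul, ← Complex.exp_nat_mul]
    congr 1
    push_cast
    ring
  have hwinv : ζ ^ (m - a) = (ζ ^ a)⁻¹ := by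
    have hmul : ζ ^ (m - a) * ζ ^ a = 1 := by
      rw [← pow_add, show m - a + a = m by omega, hζm]
    exact eq_inv_of_mul_eq_one_left hmul
  have hu0 : u ≠ 0 := Complex.exp_ne_zero _
  have hE0 : E ≠ 0 := Complex.exp_ne_zero _
  have hz0 : z ≠ 0 := by
    rw [hzdef]; exact_mod_cast (by positivity : Real.exp (2*x) ≠ 0)
  have hw0 : ζ ^ a ≠ 0 := pow_ne_zero _ (Complex.exp_ne_zero _)
  have hz1 : z + 1 ≠ 0 := by
    rw [hzdef, show ((Real.exp (2*x) : ℝ) : ℂ) + 1 = ((Real.exp (2*x) + 1 : ℝ) : ℂ) by push_cast; ring]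
    exact_mod_cast (by linarith : Real.exp (2*x) + 1 ≠ 0)
  have hzw : z - ζ ^ a ≠ 0 := abs_one_sub_ne hr (abs_zeta_pow m a)
  have hzw' : z - (ζ ^ a)⁻¹ ≠ 0 := by
    have : ‖(ζ ^ a)⁻¹‖ = 1 := by
      rw [norm_inv, abs_zeta_pow m a]; norm_num
    exact abs_one_sub_ne hr this
  have hsinh2 : Complex.sinh (x : ℂ) ^ 2 = (z - 1) ^ 2 / (4 * z) := by
    rw [sinh_unfold, hEz]
    field_simp
    ring
  have hsin2 : Complex.sin ((Real.pi : ℂ) * a / m) ^ 2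
      = (2 - ζ ^ a - (ζ ^ a)⁻¹) / 4 := by
    rw [sin_unfold, ← hudef, hw]
    rw [div_pow, mul_pow, Complex.I_sq]
    field_simp
    ring
  have hfact : Complex.sin ((Real.pi : ℂ) * a / m) ^ 2 + Complex.sinh (x : ℂ) ^ 2
      = (z - ζ ^ a) * (z - (ζ ^ a)⁻¹) / (4 * z) := by
    rw [hsin2, hsinh2]
    field_simp
    ring
  rw [hfact, hsinh2, hwinv]
  have hden : (z - ζ ^ a) * (z - (ζ ^ a)⁻¹) ≠ 0 := mul_ne_zero hzw hzw'
  have h4z : (4 : ℂ) * z ≠ 0 := by simpa using hz0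
  have hcancel : (z - 1) ^ 2 / (4 * z) / ((z - ζ ^ a) * (z - (ζ ^ a)⁻¹) / (4 * z))
      = (z - 1) ^ 2 / ((z - ζ ^ a) * (z - (ζ ^ a)⁻¹)) := by
    rw [div_div_eq_mul_div, div_mul_cancel₀ _ h4z]
  rw [hcancel]
  have hzw1 : z * ζ ^ a - 1 ≠ 0 := by
    intro hc
    rw [sub_eq_zero] at hc
    exact hzw' (sub_eq_zero.mpr (eq_inv_of_mul_eq_one_left (by linear_combination hc)))
  have e1 : z - (ζ ^ a)⁻¹ = (z * ζ ^ a - 1) / ζ ^ a := by field_simp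
  have e2 : (ζ ^ a)⁻¹ / ((z * ζ ^ a - 1) / ζ ^ a) = 1 / (z * ζ ^ a - 1) := by
    rw [div_div_eq_mul_div, inv_mul_cancel₀ hw0]
  rw [e1, e2]
  field_simp
  ring

end Stmt16

/-- For odd positive `m` and `x > 0`:
`Σ_{j=1}^{(m-1)/2} sinh²x/(sin²(πj/m)+sinh²x) = (m/2)·tanh x/tanh(mx) - 1/2`. -/
theorem stmt_16 (m : ℕ) (hm : Odd m) (hm' : 0 < m) (x : ℝ) (hx : 0 < x) :
    ∑ j ∈ Finset.Icc 1 ((m - 1) / 2),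
        Real.sinh x ^ 2 / (Real.sin (Real.pi * j / m) ^ 2 + Real.sinh x ^ 2)
      = (m / 2 : ℝ) * Real.tanh x / Real.tanh (m * x) - 1 / 2 := by
  obtain ⟨h, rfl⟩ := hm
  have hm0 : (2*h+1 : ℕ) ≠ 0 := by omega
  have hdiv : ((2*h+1) - 1) / 2 = h := by omega
  rw [hdiv]
  set r : ℝ := Real.exp (2*x) with hrdef
  have hr : 1 < r := by rw [hrdef, Real.one_lt_exp_iff]; linarith
  have hrm : 1 < r ^ (2*h+1) := one_lt_pow₀ hr (by omega)
  have htanh : Real.tanh x = (r - 1)/(r + 1) := Stmt16.tanh_aux x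
  have htanhm : Real.tanh ((2*h+1 : ℕ) * x) = (r^(2*h+1) - 1)/(r^(2*h+1) + 1) := by
    rw [Stmt16.tanh_aux, hrdef, ← Real.exp_nat_mul]
    congr 2 <;> push_cast <;> ring
  rw [htanh, htanhm]
  -- pass to ℂ
  set z : ℂ := ((r : ℝ) : ℂ) with hzdef
  set ζ : ℂ := Complex.exp (2 * Real.pi * Complex.I / (2*h+1 : ℕ)) with hζdef
  set f : ℕ → ℂ := fun j => ζ ^ j / (z - ζ ^ j) with hfdef
  have hzm : z ^ (2*h+1) ≠ 1 := by
    have : z ^ (2*h+1) = ((r ^ (2*h+1) : ℝ) : ℂ) := by push_cast; ring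
    rw [this]
    exact_mod_cast (by linarith : r ^ (2*h+1) ≠ 1)
  have hsumf : ∑ j ∈ Finset.range (2*h+1), f j = ((2*h+1 : ℕ) : ℂ) / (z ^ (2*h+1) - 1) :=
    Stmt16.sum_aux (2*h+1) hm0 z hzm
  have hsplit : ∑ j ∈ Finset.range (2*h+1), f j
      = f 0 + ∑ j ∈ Finset.range h, (f (j+1) + f ((2*h+1) - (j+1))) := by
    have e0 : ∑ j ∈ Finset.range (2*h+1), f j
        = (∑ j ∈ Finset.range (2*h), f (j+1)) + f 0 := Finset.sum_range_succ' f (2*h)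
    have e1 : ∑ j ∈ Finset.range (2*h), f (j+1)
        = (∑ j ∈ Finset.range h, f (j+1)) + ∑ j ∈ Finset.range h, f (h + j + 1) := by
      rw [show 2*h = h + h by ring, Finset.sum_range_add (fun j => f (j+1)) h h]
    have e2 : ∑ j ∈ Finset.range h, f (h + j + 1)
        = ∑ j ∈ Finset.range h, f ((2*h+1) - (j+1)) := by
      rw [← Finset.sum_range_reflect (fun j => f (h + j + 1)) h]
      refine Finset.sum_congr rfl fun j hj => ?_
      have hj' := Finset.mem_range.mp hj
      congr 1
      omega
    rw [e0, e1, e2, Finset.sum_add_distrib]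
    ring
  have hf0 : f 0 = 1 / (z - 1) := by
    simp only [hfdef, pow_zero]
  have hpairs : ∑ j ∈ Finset.range h, (f (j+1) + f ((2*h+1) - (j+1)))
      = ((2*h+1 : ℕ) : ℂ) / (z ^ (2*h+1) - 1) - 1/(z - 1) := by
    rw [← hsumf, hsplit, hf0]
    ring
  -- cast the LHS sum
  rw [← Complex.ofReal_inj, Complex.ofReal_sum]
  have hcast : ∀ j : ℕ, j ∈ Finset.Icc 1 h →
      ((Real.sinh x ^ 2 / (Real.sin (Real.pi * j / (2*h+1 : ℕ)) ^ 2 + Real.sinh x ^ 2) : ℝ) : ℂ)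
        = (z - 1)/(z + 1) * (f j + f ((2*h+1) - j) + 1) := by
    intro j hj
    obtain ⟨hj1, hj2⟩ := Finset.mem_Icc.mp hj
    have hterm := Stmt16.term_eq (2*h+1) hm0 x hx j (by omega)
    rw [← hterm]
    push_cast
    norm_num
  rw [Finset.sum_congr rfl hcast, ← Finset.mul_sum, Finset.sum_add_distrib, Finset.sum_const,
    Nat.card_Icc]
  have hIcc : ∑ j ∈ Finset.Icc 1 h, (f j + f ((2*h+1) - j))
      = ∑ j ∈ Finset.range h, (f (j+1) + f ((2*h+1) - (j+1))) := by
    rw [← Finset.Ico_add_one_right_eq_Icc, Finset.sum_Ico_eq_sum_range]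
    refine Finset.sum_congr rfl fun j hj => ?_
    congr 2 <;> omega
  rw [hIcc, hpairs]
  -- final algebra
  have hz1 : z - 1 ≠ 0 := by
    rw [hzdef, show ((r:ℝ):ℂ) - 1 = ((r - 1 : ℝ) : ℂ) by push_cast; ring]
    exact_mod_cast (by linarith : r - 1 ≠ 0)
  have hz1' : z + 1 ≠ 0 := by
    rw [hzdef, show ((r:ℝ):ℂ) + 1 = ((r + 1 : ℝ) : ℂ) by push_cast; ring]
    exact_mod_cast (by linarith : r + 1 ≠ 0)
  have hzmc : z ^ (2*h+1) = ((r ^ (2*h+1) : ℝ) : ℂ) := by push_cast; ring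
  have hzm1 : z ^ (2*h+1) - 1 ≠ 0 := by
    rw [hzmc, show ((r^(2*h+1):ℝ):ℂ) - 1 = ((r^(2*h+1) - 1 : ℝ) : ℂ) by push_cast; ring]
    exact_mod_cast (by linarith : r^(2*h+1) - 1 ≠ 0)
  have hzm1' : z ^ (2*h+1) + 1 ≠ 0 := by
    rw [hzmc, show ((r^(2*h+1):ℝ):ℂ) + 1 = ((r^(2*h+1) + 1 : ℝ) : ℂ) by push_cast; ring]
    exact_mod_cast (by linarith : r^(2*h+1) + 1 ≠ 0)
  push_cast
  have hr1 : (r:ℂ) - 1 ≠ 0 := hz1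
  have hr2 : (r:ℂ) + 1 ≠ 0 := hz1'
  have hr3 : (r:ℂ) ^ (2*h+1) - 1 ≠ 0 := hzm1
  have hr4 : (r:ℂ) ^ (2*h+1) + 1 ≠ 0 := hzm1'
  field_simp
  ring
end
end

section
/- For every positive integer k and every complex z with (1-z²)·U_{k-1}(z) ≠ 0: 1/((1-z²)·U_{k-1}(z)) = (1/(2k))·Σ_{j=1}^{2k} (-1)^{j-1} / (z - cos(πj/k)), where U_{k-1} is the Chebyshev polynomial of the second kind. -/
open Polynomial Finset

section Aux

open Complex

private lemma arith1 (k t : ℕ) (hk : 0 < k) (ht : t < 2 * k) :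
    2 * k ∣ 3 * k - t ↔ t = k := by
  constructor
  · rintro ⟨c, hc⟩
    rcases c with _ | _ | c
    · omega
    · omega
    · exfalso
      have h1 : 2 * k * (c + 1 + 1) = 2*k*c + 4*k := by ring
      have h3 : 0 ≤ 2*k*c := Nat.zero_le _
      omega
  · rintro rfl
    exact ⟨1, by omega⟩

private lemma arith2 (k t : ℕ) (hk : 0 < k) (ht : t < 2 * k) :
    2 * k ∣ t + k + 1 ↔ t = k - 1 := by
  constructor
  · rintro ⟨c, hc⟩
    rcases c with _ | _ | c
    · omega
    · omega
    · exfalso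
      have h1 : 2 * k * (c + 1 + 1) = 2*k*c + 4*k := by ring
      have h3 : 0 ≤ 2*k*c := Nat.zero_le _
      omega
  · rintro rfl
    exact ⟨1, by omega⟩

private lemma prim (k : ℕ) (hk : 0 < k) :
    IsPrimitiveRoot (Complex.exp (Real.pi * I / k)) (2 * k) := by
  have h := Complex.isPrimitiveRoot_exp (2 * k) (by omega)
  convert h using 2
  have hk0 : (k : ℂ) ≠ 0 := Nat.cast_ne_zero.mpr hk.ne'
  push_cast
  field_simp

private lemma char_sum (k : ℕ) (hk : 0 < k) (m : ℕ) :
    ∑ j ∈ Icc 1 (2 * k), (Complex.exp (Real.pi * I / k)) ^ (j * m)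
      = if 2 * k ∣ m then ((2 * k : ℕ) : ℂ) else 0 := by
  have hprim := prim k hk
  set ω := Complex.exp (Real.pi * I / k) with hω
  have hsum : ∑ j ∈ Icc 1 (2 * k), ω ^ (j * m) = ∑ j ∈ Icc 1 (2*k), (ω ^ m) ^ j := by
    refine Finset.sum_congr rfl fun j _ => ?_
    rw [← pow_mul, Nat.mul_comm]
  rw [hsum]
  by_cases hdvd : 2 * k ∣ m
  · have h1 : ω ^ m = 1 := (hprim.pow_eq_one_iff_dvd m).mpr hdvd
    simp [h1, hdvd, Nat.card_Icc]
  · have h1 : ω ^ m ≠ 1 := fun h => hdvd ((hprim.pow_eq_one_iff_dvd m).mp h)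
    have h2 : (ω ^ m) ^ (2 * k) = 1 := by
      rw [← pow_mul, Nat.mul_comm, pow_mul, hprim.pow_eq_one, one_pow]
    rw [if_neg hdvd, ← Finset.Ico_add_one_right_eq_Icc, Finset.sum_Ico_eq_sum_range]
    simp only [Nat.add_sub_cancel]
    have h3 : ∑ j ∈ range (2 * k), (ω ^ m) ^ (1 + j)
        = (ω ^ m) * ∑ j ∈ range (2 * k), (ω ^ m) ^ j := by
      rw [Finset.mul_sum]
      exact Finset.sum_congr rfl fun j _ => by rw [pow_add, pow_one]
    rw [h3, geom_sum_eq h1, h2]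
    simp

/-- The key partial-fraction step for a single term of the sum. -/
private lemma term_eq (k j : ℕ) (hk : 0 < k) (hj1 : 1 ≤ j) (z w : ℂ) (hw : w ≠ 0)
    (hzw : w ^ 2 + 1 = 2 * z * w)
    (hwne1 : w ^ (2*k) ≠ 1)
    (hw2ne : w ^ 2 - 1 ≠ 0) (hw2kne : w ^ (2*k) - 1 ≠ 0) :
    (-1 : ℂ) ^ (j - 1) / (z - (Real.cos (Real.pi * j / k) : ℂ))
      = (-2*w/((w^2-1)*(w^(2*k)-1)))
          * ∑ t ∈ range (2*k), w^t * (Complex.exp (Real.pi * I / k))^(j*(3*k-t))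
      + (-2*w^2/((w^2-1)*(w^(2*k)-1)))
          * ∑ t ∈ range (2*k), w^t * (Complex.exp (Real.pi * I / k))^(j*(t+k+1)) := by
  have hk0 : (k : ℂ) ≠ 0 := Nat.cast_ne_zero.mpr hk.ne'
  set ω : ℂ := Complex.exp (Real.pi * I / k) with hωdef
  have hω2k : ω ^ (2*k) = 1 := by
    rw [hωdef, ← Complex.exp_nat_mul]
    have : ((2*k : ℕ) : ℂ) * (↑Real.pi * I / ↑k) = 2 * Real.pi * I := by
      push_cast; field_simp
    rw [this, Complex.exp_two_pi_mul_I]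
  set ζ : ℂ := ω ^ j with hζdef
  have hζ0 : ζ ≠ 0 := pow_ne_zero _ (Complex.exp_ne_zero _)
  have hζ2k : ζ ^ (2*k) = 1 := by
    rw [hζdef, ← pow_mul, Nat.mul_comm, pow_mul, hω2k, one_pow]
  have hwζ : w - ζ ≠ 0 := by
    rw [sub_ne_zero]
    intro h
    exact hwne1 (by rw [h, hζ2k])
  have hζw1 : ζ * w - 1 ≠ 0 := by
    rw [sub_ne_zero]
    intro h
    apply hwne1
    have : (ζ * w) ^ (2*k) = 1 := by rw [h, one_pow]
    rw [mul_pow, hζ2k, one_mul] at this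
    exact this
  -- cos(πj/k) in terms of ζ
  have hcosj : (Real.cos (Real.pi * j / k) : ℂ) * (2 * ζ) = ζ ^ 2 + 1 := by
    have hu : Complex.exp ((Real.pi * j / k : ℝ) * I) = ζ := by
      rw [hζdef, hωdef, ← Complex.exp_nat_mul]
      congr 1
      push_cast
      ring
    have hu' : Complex.exp (-((Real.pi * j / k : ℝ) * I)) * ζ = 1 := by
      rw [← hu, ← Complex.exp_add]; simp
    have f1 : ζ = Complex.cos (Real.pi * j / k : ℝ) + Complex.sin (Real.pi * j / k : ℝ) * I := by
      rw [← hu]; exact Complex.exp_mul_I _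
    have f2 : Complex.exp (-((Real.pi * j / k : ℝ) * I))
        = Complex.cos (Real.pi * j / k : ℝ) - Complex.sin (Real.pi * j / k : ℝ) * I := by
      rw [← neg_mul, Complex.exp_mul_I, Complex.cos_neg, Complex.sin_neg]; ring
    rw [Complex.ofReal_cos]
    linear_combination -ζ * f1 - ζ * f2 + hu'
  have h2wζ : (2:ℂ) * w * ζ ≠ 0 :=
    mul_ne_zero (mul_ne_zero two_ne_zero hw) hζ0
  have hzsub : z - (Real.cos (Real.pi * j / k) : ℂ) = (w - ζ) * (ζ * w - 1) / (2 * w * ζ) := by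
    rw [eq_div_iff h2wζ]
    linear_combination (-ζ) * hzw + (-w) * hcosj
  -- sign
  have hωk : ω ^ k = -1 := by
    rw [hωdef, ← Complex.exp_nat_mul]
    have : ((k : ℕ) : ℂ) * (↑Real.pi * I / ↑k) = Real.pi * I := by field_simp
    rw [this, Complex.exp_pi_mul_I]
  have hζk : ζ ^ k = (-1 : ℂ) ^ j := by
    rw [hζdef, ← pow_mul, Nat.mul_comm, pow_mul, hωk]
  have hsign : (-1 : ℂ) ^ (j - 1) = -ζ ^ k := by
    obtain ⟨m, rfl⟩ := Nat.exists_eq_add_of_le hj1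
    rw [hζk]
    simp [pow_add, pow_succ]
  -- geometric sums
  have hA : (∑ t ∈ range (2*k), w^t * ζ^(2*k-1-t)) * (w - ζ) = w^(2*k) - 1 := by
    rw [geom_sum₂_mul, hζ2k]
  have hB : (∑ t ∈ range (2*k), (ζ*w)^t) * (ζ*w - 1) = w^(2*k) - 1 := by
    rw [geom_sum_mul, mul_pow, hζ2k, one_mul]
  have hA' : (∑ t ∈ range (2*k), w^t * ζ^(2*k-1-t)) = (w^(2*k) - 1)/(w - ζ) :=
    (eq_div_iff hwζ).mpr hA
  have hB' : (∑ t ∈ range (2*k), (ζ*w)^t) = (w^(2*k) - 1)/(ζ*w - 1) :=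
    (eq_div_iff hζw1).mpr hB
  -- rewrite the two sums
  have e1 : ∑ t ∈ range (2*k), w^t * ω^(j*(3*k-t))
      = ζ^(k+1) * ∑ t ∈ range (2*k), w^t * ζ^(2*k-1-t) := by
    rw [Finset.mul_sum]
    refine Finset.sum_congr rfl fun t ht => ?_
    rw [Finset.mem_range] at ht
    have hsplit : j*(3*k-t) = j*(k+1) + j*(2*k-1-t) := by
      have : 3*k-t = (k+1) + (2*k-1-t) := by omega
      rw [this]; ring
    rw [hsplit, pow_add, pow_mul, pow_mul, ← hζdef]
    ring
  have e2 : ∑ t ∈ range (2*k), w^t * ω^(j*(t+k+1))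
      = ζ^(k+1) * ∑ t ∈ range (2*k), (ζ*w)^t := by
    rw [Finset.mul_sum]
    refine Finset.sum_congr rfl fun t ht => ?_
    have hsplit : j*(t+k+1) = j*(k+1) + j*t := by ring
    rw [hsplit, pow_add, pow_mul, pow_mul, ← hζdef, mul_pow]
    ring
  rw [e1, e2, hA', hB', hsign, hzsub]
  rw [div_div_eq_mul_div, div_mul_eq_mul_div, div_mul_eq_mul_div]
  have hwζ1 : w * ζ - 1 ≠ 0 := by rwa [mul_comm]
  field_simp
  ring

end Aux

/-- Partial fraction expansion of the reciprocal of `(1-z²)U_{k-1}(z)`: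
`1/((1-z²)U_{k-1}(z)) = (1/(2k)) Σ_{j=1}^{2k} (-1)^{j-1}/(z - cos(πj/k))`. -/
theorem stmt_19 (k : ℕ) (hk : 0 < k) (z : ℂ)
    (hz : (1 - z ^ 2) * (Polynomial.Chebyshev.U ℂ (k - 1)).eval z ≠ 0) :
    1 / ((1 - z ^ 2) * (Polynomial.Chebyshev.U ℂ (k - 1)).eval z)
      = (1 / (2 * k : ℂ)) * ∑ j ∈ Finset.Icc 1 (2 * k),
          (-1 : ℂ) ^ (j - 1) / (z - (Real.cos (Real.pi * j / k) : ℂ)) := by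
  classical
  open Complex in
  obtain ⟨θ, hθ⟩ := Complex.cos_surjective z
  have hk0 : (k : ℂ) ≠ 0 := Nat.cast_ne_zero.mpr hk.ne'
  set w : ℂ := Complex.exp (θ * I) with hwdef
  set v : ℂ := Complex.exp (-(θ * I)) with hvdef
  have hw : w ≠ 0 := Complex.exp_ne_zero _
  have hw1 : w = Complex.cos θ + Complex.sin θ * I := Complex.exp_mul_I θ
  have hv2 : v = Complex.cos θ - Complex.sin θ * I := by
    rw [hvdef, ← neg_mul, Complex.exp_mul_I, Complex.cos_neg, Complex.sin_neg]; ring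
  have hv : w * v = 1 := by
    rw [hwdef, hvdef, ← Complex.exp_add]; simp
  have hzw : w ^ 2 + 1 = 2 * z * w := by
    rw [← hθ]; linear_combination w * hw1 + w * hv2 - hv
  have hsin : w ^ 2 - 1 = Complex.sin θ * (2 * I) * w := by
    linear_combination w * hw1 - w * hv2 + hv
  have hwk : Complex.exp ((k : ℂ) * θ * I) = w ^ k := by
    rw [hwdef, ← Complex.exp_nat_mul]; ring_nf
  have hvk : Complex.exp (-((k : ℂ) * θ * I)) = v ^ k := by
    rw [hvdef, ← Complex.exp_nat_mul]; ring_nf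
  have e1 : w ^ k = Complex.cos ((k:ℂ)*θ) + Complex.sin ((k:ℂ)*θ) * I := by
    rw [← hwk]; exact Complex.exp_mul_I _
  have e2 : v ^ k = Complex.cos ((k:ℂ)*θ) - Complex.sin ((k:ℂ)*θ) * I := by
    rw [← hvk, ← neg_mul, Complex.exp_mul_I, Complex.cos_neg, Complex.sin_neg]; ring
  have hvk2 : w ^ k * v ^ k = 1 := by rw [← mul_pow, hv, one_pow]
  have hsink : w ^ (2*k) - 1 = Complex.sin ((k:ℂ)*θ) * (2 * I) * w ^ k := by
    linear_combination (w^k) * e1 - (w^k) * e2 + hvk2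
  -- Chebyshev
  have hU : (Polynomial.Chebyshev.U ℂ (k - 1)).eval z * Complex.sin θ
      = Complex.sin ((k:ℂ) * θ) := by
    rw [← hθ, Polynomial.Chebyshev.U_complex_cos θ ((k:ℤ)-1)]
    push_cast; ring_nf
  have h1z : 1 - z ^ 2 = Complex.sin θ ^ 2 := by
    rw [← hθ]; linear_combination - Complex.sin_sq_add_cos_sq θ
  -- nonvanishing
  have hsθ : Complex.sin θ ≠ 0 := by
    intro h; apply hz; rw [h1z, h]; ring
  have hU0 : (Polynomial.Chebyshev.U ℂ (k - 1)).eval z ≠ 0 :=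
    fun h => hz (by rw [h, mul_zero])
  have hSk : Complex.sin ((k:ℂ)*θ) ≠ 0 := by
    rw [← hU]; exact mul_ne_zero hU0 hsθ
  have hw2ne : w ^ 2 - 1 ≠ 0 := by
    rw [hsin]
    exact mul_ne_zero (mul_ne_zero hsθ (by simp [Complex.I_ne_zero])) hw
  have hw2kne : w ^ (2*k) - 1 ≠ 0 := by
    rw [hsink]
    exact mul_ne_zero (mul_ne_zero hSk (by simp [Complex.I_ne_zero])) (pow_ne_zero _ hw)
  have hwne1 : w ^ (2*k) ≠ 1 := fun h => hw2kne (by rw [h]; ring)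
  -- the key factorization of the denominator
  have hD4 : ((1 - z ^ 2) * (Polynomial.Chebyshev.U ℂ (k - 1)).eval z) * (4 * w^(k+1))
      = -((w^2-1) * (w^(2*k)-1)) := by
    have hm : (Complex.sin θ * (2*I) * w) * (Complex.sin ((k:ℂ)*θ) * (2*I) * w^k)
        = (w^2-1) * (w^(2*k)-1) := by rw [← hsin, ← hsink]
    have hIsq : (I:ℂ)^2 = -1 := Complex.I_sq
    rw [h1z]
    linear_combination (Complex.sin θ * 4 * w^(k+1)) * hU - hm
      + 4 * Complex.sin θ * Complex.sin ((k:ℂ)*θ) * w^(k+1) * hIsq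
  -- evaluate the two double sums
  set ω : ℂ := Complex.exp (Real.pi * I / k) with hωdef
  have S1 : ∑ j ∈ Icc 1 (2*k), ∑ t ∈ range (2*k), w^t * ω^(j*(3*k-t))
      = 2*(k:ℂ) * w^k := by
    rw [Finset.sum_comm]
    rw [Finset.sum_congr rfl (fun t _ => by
      rw [← Finset.mul_sum, char_sum k hk (3*k-t)] :
      ∀ t ∈ range (2*k), _ = w^t * (if 2*k ∣ 3*k-t then ((2*k:ℕ):ℂ) else 0))]
    rw [Finset.sum_eq_single_of_mem k (Finset.mem_range.mpr (by omega))]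
    · rw [if_pos ((arith1 k k hk (by omega)).mpr rfl)]
      push_cast; ring
    · intro t ht hne
      rw [Finset.mem_range] at ht
      rw [if_neg (fun h => hne ((arith1 k t hk ht).mp h)), mul_zero]
  have S2 : ∑ j ∈ Icc 1 (2*k), ∑ t ∈ range (2*k), w^t * ω^(j*(t+k+1))
      = 2*(k:ℂ) * w^(k-1) := by
    rw [Finset.sum_comm]
    rw [Finset.sum_congr rfl (fun t _ => by
      rw [← Finset.mul_sum, char_sum k hk (t+k+1)] :
      ∀ t ∈ range (2*k), _ = w^t * (if 2*k ∣ t+k+1 then ((2*k:ℕ):ℂ) else 0))]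
    rw [Finset.sum_eq_single_of_mem (k-1) (Finset.mem_range.mpr (by omega))]
    · rw [if_pos ((arith2 k (k-1) hk (by omega)).mpr rfl)]
      push_cast; ring
    · intro t ht hne
      rw [Finset.mem_range] at ht
      rw [if_neg (fun h => hne ((arith2 k t hk ht).mp h)), mul_zero]
  have hterms : ∑ j ∈ Icc 1 (2*k),
        (-1 : ℂ) ^ (j - 1) / (z - (Real.cos (Real.pi * j / k) : ℂ))
      = (-2*w/((w^2-1)*(w^(2*k)-1))) * (2*(k:ℂ) * w^k)
        + (-2*w^2/((w^2-1)*(w^(2*k)-1))) * (2*(k:ℂ) * w^(k-1)) := by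
    rw [Finset.sum_congr rfl (fun j hj =>
      term_eq k j hk (Finset.mem_Icc.mp hj).1 z w hw hzw hwne1 hw2ne hw2kne)]
    rw [Finset.sum_add_distrib, ← Finset.mul_sum, ← Finset.mul_sum, S1, S2]
  rw [hterms]
  -- final algebra
  have hE : (w^2-1)*(w^(2*k)-1) ≠ 0 := mul_ne_zero hw2ne hw2kne
  have hwk1 : w^(k-1) * w^2 = w^(k+1) := by
    rw [← pow_add]; congr 1; omega
  have hwk2 : w^k * w = w^(k+1) := (pow_succ w k).symm
  have hstep : (-2*w/((w^2-1)*(w^(2*k)-1))) * (2*(k:ℂ) * w^k)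
        + (-2*w^2/((w^2-1)*(w^(2*k)-1))) * (2*(k:ℂ) * w^(k-1))
      = -8*(k:ℂ)*w^(k+1)/((w^2-1)*(w^(2*k)-1)) := by
    rw [div_mul_eq_mul_div, div_mul_eq_mul_div, ← add_div]
    congr 1
    linear_combination (-4*(k:ℂ)) * hwk2 + (-4*(k:ℂ)) * hwk1
  rw [hstep]
  have h2k0 : (2*(k:ℂ)) ≠ 0 := mul_ne_zero two_ne_zero hk0
  have hfin : (1:ℂ)/(2*(k:ℂ)) * (-8*(k:ℂ)*w^(k+1)/((w^2-1)*(w^(2*k)-1)))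
      = -4*w^(k+1)/((w^2-1)*(w^(2*k)-1)) := by
    field_simp
    ring
  rw [hfin, div_eq_div_iff hz hE]
  linear_combination hD4
end
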